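/- arXiv:1406.2196 — 4 statements merged into one kernel-verified Lean document; each statement's English description precedes it below -/
import Mathlib

section
/- Let n ≥ 3 and let I be a nonempty proper subset of the vertex set of the cycle graph C_n on ZMod n. Then the number of connected components of the subgraph of C_n induced by I equals the number of connected components of the subgraph induced by the complement of I. -/
/-- The cycle graph on `ZMod n`: `i` and `j` are adjacent iff `j = i + 1` or `i = j + 1`. -/
def cycleGraph (n : ℕ) : SimpleGraph (ZMod n) :=
  SimpleGraph.fromRel (fun i j => j = i + 1)

section Aux

variable {n : ℕ} [NeZero n]

/-- The distance from `v` forward to the end of its run inside `J`. -/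
noncomputable def epk (J : Set (ZMod n)) (v : ZMod n) : ℕ :=
  sInf {k : ℕ | v + (k : ZMod n) + 1 ∉ J}

/-- The forward endpoint of the run of `v` in `J`. -/
noncomputable def ep (J : Set (ZMod n)) (v : ZMod n) : ZMod n := v + (epk J v : ZMod n)

lemma epk_ne (J : Set (ZMod n)) (hJ : J ≠ Set.univ) (v : ZMod n) :
    {k : ℕ | v + (k : ZMod n) + 1 ∉ J}.Nonempty := by
  obtain ⟨x, hx⟩ := (Set.ne_univ_iff_exists_notMem _).mp hJ
  refine ⟨(x - v - 1).val, ?_⟩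
  have h : v + (((x - v - 1).val : ℕ) : ZMod n) + 1 = x := by
    rw [ZMod.natCast_val, ZMod.cast_id]; ring
  show v + (((x - v - 1).val : ℕ) : ZMod n) + 1 ∉ J
  rw [h]; exact hx

lemma ep_mem (J : Set (ZMod n)) (hJ : J ≠ Set.univ) {v : ZMod n} (hv : v ∈ J) :
    ep J v ∈ J := by
  rcases h : epk J v with _ | m
  · simpa [ep, h] using hv
  · have hm : m ∉ {k : ℕ | v + (k : ZMod n) + 1 ∉ J} :=
      Nat.notMem_of_lt_sInf (by rw [show sInf _ = epk J v from rfl, h]; omega)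
    have : v + (m : ZMod n) + 1 ∈ J := by simpa using hm
    have he : ep J v = v + (m : ZMod n) + 1 := by
      rw [ep, h]; push_cast; ring
    rwa [he]

lemma ep_add_one_not_mem (J : Set (ZMod n)) (hJ : J ≠ Set.univ) (v : ZMod n) :
    ep J v + 1 ∉ J := by
  have := Nat.sInf_mem (epk_ne J hJ v)
  simpa [ep, epk] using this

lemma epk_succ (J : Set (ZMod n)) (hJ : J ≠ Set.univ) {v : ZMod n}
    (hv1 : v + 1 ∈ J) : epk J v = epk J (v + 1) + 1 := by
  set S : Set ℕ := {k : ℕ | v + (k : ZMod n) + 1 ∉ J} with hS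
  set T : Set ℕ := {k : ℕ | (v + 1) + (k : ZMod n) + 1 ∉ J} with hT
  have key : ∀ k : ℕ, k + 1 ∈ S ↔ k ∈ T := by
    intro k
    have h : v + ((k + 1 : ℕ) : ZMod n) + 1 = (v + 1) + (k : ZMod n) + 1 := by push_cast; ring
    simp only [hS, hT, Set.mem_setOf_eq, h]
  have h0 : 0 ∉ S := by simpa [hS] using hv1
  have hTne : T.Nonempty := epk_ne J hJ (v + 1)
  have h1 : sInf S ≤ sInf T + 1 := Nat.sInf_le ((key _).mpr (Nat.sInf_mem hTne))
  have hSne : S.Nonempty := epk_ne J hJ v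
  have h2 : sInf T + 1 ≤ sInf S := by
    have hmem := Nat.sInf_mem hSne
    rcases hm : sInf S with _ | m
    · exact absurd (hm ▸ hmem) h0
    · have : m ∈ T := (key m).mp (hm ▸ hmem)
      have := Nat.sInf_le this
      omega
  have : sInf S = sInf T + 1 := le_antisymm h1 h2
  simpa [epk, hS, hT] using this

lemma ep_succ_eq (J : Set (ZMod n)) (hJ : J ≠ Set.univ) {v : ZMod n}
    (hv1 : v + 1 ∈ J) : ep J (v + 1) = ep J v := by
  rw [ep, ep, epk_succ J hJ hv1]; push_cast; ring

variable [Fact (1 < n)]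

lemma cycle_adj_succ (v : ZMod n) : (cycleGraph n).Adj v (v + 1) := by
  rw [cycleGraph, SimpleGraph.fromRel_adj]
  exact ⟨by simp [left_eq_add], Or.inl rfl⟩

lemma reach_ep (J : Set (ZMod n)) (hJ : J ≠ Set.univ) :
    ∀ (m : ℕ) (v : ZMod n) (hv : v ∈ J), epk J v = m →
      ((cycleGraph n).induce J).Reachable ⟨v, hv⟩ ⟨ep J v, ep_mem J hJ hv⟩ := by
  intro m
  induction m with
  | zero =>
    intro v hv h
    have hev : ep J v = v := by simp [ep, h]
    rw [show (⟨ep J v, ep_mem J hJ hv⟩ : ↥J) = ⟨v, hv⟩ from Subtype.ext hev]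
  | succ m ih =>
    intro v hv h
    have hv1 : v + 1 ∈ J := by
      by_contra hc
      have : epk J v = 0 := Nat.sInf_eq_zero.mpr (Or.inl (by simpa using hc))
      omega
    have hk : epk J (v + 1) = m := by have := epk_succ J hJ hv1; omega
    have hadj : ((cycleGraph n).induce J).Adj ⟨v, hv⟩ ⟨v + 1, hv1⟩ := cycle_adj_succ v
    have hr := ih (v + 1) hv1 hk
    have he : ep J (v + 1) = ep J v := ep_succ_eq J hJ hv1
    rw [show (⟨ep J (v+1), ep_mem J hJ hv1⟩ : ↥J) = ⟨ep J v, ep_mem J hJ hv⟩ from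
      Subtype.ext he] at hr
    exact hadj.reachable.trans hr

lemma ep_eq_of_adj (J : Set (ZMod n)) (hJ : J ≠ Set.univ) {a b : ↥J}
    (h : ((cycleGraph n).induce J).Adj a b) : ep J a.1 = ep J b.1 := by
  have h' : (cycleGraph n).Adj a.1 b.1 := h
  rw [cycleGraph, SimpleGraph.fromRel_adj] at h'
  rcases h'.2 with h1 | h1
  · have := ep_succ_eq J hJ (h1 ▸ b.2)
    rw [← h1] at this; exact this.symm
  · have := ep_succ_eq J hJ (h1 ▸ a.2)
    rw [← h1] at this; exact this

lemma ep_eq_of_walk (J : Set (ZMod n)) (hJ : J ≠ Set.univ) {a b : ↥J}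
    (p : ((cycleGraph n).induce J).Walk a b) : ep J a.1 = ep J b.1 := by
  induction p with
  | nil => rfl
  | cons h _ ih => rw [ep_eq_of_adj J hJ h]; exact ih

lemma card_components (J : Set (ZMod n)) (hJ : J ≠ Set.univ) :
    Nat.card ((cycleGraph n).induce J).ConnectedComponent
      = Nat.card {i : ZMod n // i ∈ J ∧ i + 1 ∉ J} := by
  refine Nat.card_eq_of_bijective (SimpleGraph.ConnectedComponent.lift
      (fun v : ↥J => (⟨ep J v.1, ep_mem J hJ v.2, ep_add_one_not_mem J hJ v.1⟩ :
        {i : ZMod n // i ∈ J ∧ i + 1 ∉ J}))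
      (fun v w p _ => Subtype.ext (ep_eq_of_walk J hJ p))) ⟨?_, ?_⟩
  · refine SimpleGraph.ConnectedComponent.ind₂ (fun v w h => ?_)
    simp only [SimpleGraph.ConnectedComponent.lift_mk] at h
    have hvw : ep J v.1 = ep J w.1 := congrArg Subtype.val h
    have hv := reach_ep J hJ (epk J v.1) v.1 v.2 rfl
    have hw := reach_ep J hJ (epk J w.1) w.1 w.2 rfl
    rw [show (⟨ep J w.1, ep_mem J hJ w.2⟩ : ↥J) = ⟨ep J v.1, ep_mem J hJ v.2⟩ from
      Subtype.ext hvw.symm] at hw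
    exact SimpleGraph.ConnectedComponent.sound (hv.trans hw.symm)
  · rintro ⟨i, hi1, hi2⟩
    refine ⟨(cycleGraph n).induce J |>.connectedComponentMk ⟨i, hi1⟩, ?_⟩
    have h0 : epk J i = 0 := Nat.sInf_eq_zero.mpr (Or.inl (by simpa using hi2))
    simp only [SimpleGraph.ConnectedComponent.lift_mk]
    exact Subtype.ext (by simp [ep, h0])

end Aux

theorem stmt0 (n : ℕ) (hn : 3 ≤ n) (I : Set (ZMod n)) (hne : I.Nonempty)
    (hI : I ≠ Set.univ) :
    Nat.card ((cycleGraph n).induce I).ConnectedComponent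
      = Nat.card ((cycleGraph n).induce Iᶜ).ConnectedComponent := by
  haveI : NeZero n := ⟨by omega⟩
  haveI : Fact (1 < n) := ⟨by omega⟩
  have hIc : Iᶜ ≠ Set.univ := by
    intro h
    rw [Set.compl_univ_iff] at h
    exact hne.ne_empty h
  rw [card_components I hI, card_components Iᶜ hIc]
  -- now a counting argument
  have hA : {i : ZMod n | i ∈ I ∧ i + 1 ∉ I} = I \ {i : ZMod n | i + 1 ∈ I} := by
    ext i; simp [Set.mem_diff]
  have hB : {i : ZMod n | i ∈ Iᶜ ∧ i + 1 ∉ Iᶜ} = {i : ZMod n | i + 1 ∈ I} \ I := by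
    ext i; simp [Set.mem_diff, and_comm]
  have hT : ({i : ZMod n | i + 1 ∈ I}).ncard = I.ncard := by
    have himg : (fun j : ZMod n => j - 1) '' I = {i : ZMod n | i + 1 ∈ I} := by
      ext i
      constructor
      · rintro ⟨j, hj, rfl⟩; simpa using hj
      · intro hi; exact ⟨i + 1, hi, by ring⟩
    rw [← himg, Set.ncard_image_of_injective _ (fun a b h => by
      have : a - 1 + 1 = b - 1 + 1 := by rw [h]
      simpa using this)]
  have key : (I \ {i : ZMod n | i + 1 ∈ I}).ncard
      = ({i : ZMod n | i + 1 ∈ I} \ I).ncard := by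
    have h1 := Set.ncard_diff_add_ncard I {i : ZMod n | i + 1 ∈ I}
      (Set.toFinite _) (Set.toFinite _)
    have h2 := Set.ncard_diff_add_ncard {i : ZMod n | i + 1 ∈ I} I
      (Set.toFinite _) (Set.toFinite _)
    rw [Set.union_comm] at h2
    omega
  calc Nat.card {i : ZMod n // i ∈ I ∧ i + 1 ∉ I}
      = ({i : ZMod n | i ∈ I ∧ i + 1 ∉ I}).ncard := Nat.card_coe_set_eq _
    _ = ({i : ZMod n | i ∈ Iᶜ ∧ i + 1 ∉ Iᶜ}).ncard := by rw [hA, hB, key]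
    _ = Nat.card {i : ZMod n // i ∈ Iᶜ ∧ i + 1 ∉ Iᶜ} := (Nat.card_coe_set_eq _).symm
end

section
/- For n ≥ 4, the number of equivalence classes {I, Iᶜ} of subsets I ⊆ ZMod n with 2 ≤ |I| ≤ n-2 such that the induced subgraph of the cycle graph on I has at least 2 connected components equals 2^{n-1} - n(n-1)/2 - 1. -/
namespace StmtAux

variable {n : ℕ}

/-- The arc starting at `a` of length `k`, as a `Finset`. -/
def intvF (n : ℕ) (a : ZMod n) (k : ℕ) : Finset (ZMod n) :=
  (Finset.range k).image (fun i : ℕ => a + (i : ZMod n))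

lemma mem_intvF {a x : ZMod n} {k : ℕ} :
    x ∈ intvF n a k ↔ ∃ i, i < k ∧ x = a + (i : ℕ) := by
  simp only [intvF, Finset.mem_image, Finset.mem_range]
  constructor
  · rintro ⟨i, hi, rfl⟩; exact ⟨i, hi, rfl⟩
  · rintro ⟨i, hi, rfl⟩; exact ⟨i, hi, rfl⟩

lemma cast_inj_of_lt [NeZero n] {i j : ℕ} (hi : i < n) (hj : j < n)
    (h : (i : ZMod n) = (j : ZMod n)) : i = j := by
  calc i = ((i : ZMod n)).val := (ZMod.val_cast_of_lt hi).symm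
    _ = ((j : ZMod n)).val := by rw [h]
    _ = j := ZMod.val_cast_of_lt hj

lemma card_intvF [NeZero n] {a : ZMod n} {k : ℕ} (hk : k ≤ n) : (intvF n a k).card = k := by
  rw [intvF, Finset.card_image_of_injOn, Finset.card_range]
  intro i hi j hj hij
  simp only [Finset.coe_range, Set.mem_Iio] at hi hj
  exact cast_inj_of_lt (lt_of_lt_of_le hi hk) (lt_of_lt_of_le hj hk) (by
    have := hij; exact add_left_cancel this)

lemma natCast_val_cast [NeZero n] (x : ZMod n) : ((x.val : ℕ) : ZMod n) = x := by
  rw [ZMod.natCast_val, ZMod.cast_id]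

lemma intvF_univ [NeZero n] {a : ZMod n} {k : ℕ} (hk : n ≤ k) : intvF n a k = Finset.univ := by
  ext x
  simp only [Finset.mem_univ, iff_true]
  refine mem_intvF.mpr ⟨(x - a).val, lt_of_lt_of_le (ZMod.val_lt _) hk, ?_⟩
  rw [natCast_val_cast]; ring

lemma compl_intvF [NeZero n] {a : ZMod n} {k : ℕ} (hk : k ≤ n) :
    (intvF n a k)ᶜ = intvF n (a + (k : ℕ)) (n - k) := by
  ext x
  simp only [Finset.mem_compl, mem_intvF]
  constructor
  · intro hx
    set j := (x - a).val with hj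
    have hjn : j < n := ZMod.val_lt _
    have hxa : x = a + (j : ℕ) := by rw [hj, natCast_val_cast]; ring
    have hjk : ¬ j < k := fun h => hx ⟨j, h, hxa⟩
    refine ⟨j - k, by omega, ?_⟩
    rw [hxa, show ((j - k : ℕ) : ZMod n) = (j : ℕ) - (k : ℕ) from by
      rw [Nat.cast_sub (by omega : k ≤ j)]]
    ring
  · rintro ⟨i, hi, rfl⟩ ⟨i', hi', he⟩
    have h2 : ((k + i : ℕ) : ZMod n) = ((i' : ℕ) : ZMod n) := by
      push_cast
      linear_combination he
    have := cast_inj_of_lt (show k + i < n by omega) (by omega) h2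
    omega

lemma intvF_inj [NeZero n] {a b : ZMod n} {k l : ℕ} (hn : 1 ≤ n) (hk1 : 1 ≤ k) (hk2 : k ≤ n - 1)
    (hl1 : 1 ≤ l) (hl2 : l ≤ n - 1) (h : intvF n a k = intvF n b l) : a = b ∧ k = l := by
  have hkl : k = l := by
    rw [← card_intvF (a := a) (by omega : k ≤ n), h, card_intvF (by omega : l ≤ n)]
  subst hkl
  refine ⟨?_, rfl⟩
  have ha : a ∈ intvF n b k := h ▸ mem_intvF.mpr ⟨0, by omega, by simp⟩
  obtain ⟨j, hj, hab⟩ := mem_intvF.mp ha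
  rcases Nat.eq_zero_or_pos j with rfl | hj0
  · simpa using hab
  · exfalso
    have hmem : a - 1 ∈ intvF n b k := mem_intvF.mpr ⟨j - 1, by omega, by
      rw [hab, show (((j - 1 : ℕ)) : ZMod n) = (j : ℕ) - 1 from by
        rw [Nat.cast_sub (by omega : 1 ≤ j)]; norm_num]
      ring⟩
    rw [← h] at hmem
    obtain ⟨i, hi, he⟩ := mem_intvF.mp hmem
    have h2 : ((i + 1 : ℕ) : ZMod n) = ((0 : ℕ) : ZMod n) := by
      push_cast
      linear_combination -he
    have := cast_inj_of_lt (show i + 1 < n by omega) (by omega) h2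
    omega

end StmtAux

namespace StmtAux

variable {n : ℕ}

lemma cycle_adj {x y : ZMod n} : (cycleGraph n).Adj x y ↔ x ≠ y ∧ (y = x + 1 ∨ x = y + 1) :=
  SimpleGraph.fromRel_adj _ x y

lemma induce_adj' {I : Set (ZMod n)} {u v : ↥I} :
    ((cycleGraph n).induce I).Adj u v ↔ (cycleGraph n).Adj ↑u ↑v := Iff.rfl

lemma one_ne_zero' [NeZero n] (hn : 2 ≤ n) : (1 : ZMod n) ≠ 0 := by
  intro h
  have h2 : ((1 : ℕ) : ZMod n) = ((0 : ℕ) : ZMod n) := by push_cast; exact h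
  have := cast_inj_of_lt (show 1 < n by omega) (by omega) h2
  omega

lemma intvF_connected [NeZero n] (hn : 2 ≤ n) (a : ZMod n) {k : ℕ} (hk1 : 1 ≤ k) (hk : k ≤ n) :
    ((cycleGraph n).induce (↑(intvF n a k) : Set (ZMod n))).Connected := by
  set S : Set (ZMod n) := ↑(intvF n a k) with hS
  have hmem : ∀ i, i < k → a + (i : ℕ) ∈ S := fun i hi => by
    exact Finset.mem_coe.mpr (mem_intvF.mpr ⟨i, hi, rfl⟩)
  have ha : a ∈ S := by simpa using hmem 0 (by omega)
  have key : ∀ i (hik : i < k),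
      ((cycleGraph n).induce S).Reachable ⟨a, ha⟩ ⟨a + (i : ℕ), hmem i hik⟩ := by
    intro i
    induction i with
    | zero =>
      intro h
      have : (⟨a + ((0 : ℕ) : ZMod n), hmem 0 h⟩ : ↥S) = ⟨a, ha⟩ := Subtype.ext (by simp)
      rw [this]
    | succ i ih =>
      intro hik
      have hadj : ((cycleGraph n).induce S).Adj ⟨a + (i : ℕ), hmem i (by omega)⟩
          ⟨a + ((i + 1 : ℕ) : ZMod n), hmem (i + 1) hik⟩ := by
        rw [induce_adj', cycle_adj]
        refine ⟨?_, Or.inl (by push_cast; ring)⟩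
        intro he
        apply one_ne_zero' hn
        have : a + ((i : ℕ) : ZMod n) + 1 = a + ((i : ℕ) : ZMod n) + 0 := by
          push_cast at he ⊢
          linear_combination -he
        exact add_left_cancel this
      exact (ih (by omega)).trans hadj.reachable
  haveI : Nonempty ↥S := ⟨⟨a, ha⟩⟩
  refine ⟨fun u v => ?_⟩
  obtain ⟨i, hik, hu⟩ := mem_intvF.mp (Finset.mem_coe.mp u.2)
  obtain ⟨j, hjk, hv⟩ := mem_intvF.mp (Finset.mem_coe.mp v.2)
  have hu' : u = ⟨a + (i : ℕ), hmem i hik⟩ := Subtype.ext hu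
  have hv' : v = ⟨a + (j : ℕ), hmem j hjk⟩ := Subtype.ext hv
  rw [hu', hv']
  exact (key i hik).symm.trans (key j hjk)

open scoped Classical in
noncomputable def mrun (I : Set (ZMod n)) (y : ZMod n) : ℕ :=
  if h : ∃ m : ℕ, y - ((m + 1 : ℕ) : ZMod n) ∉ I then Nat.find h else 0

section mrun

variable {I : Set (ZMod n)} {c y : ZMod n}

lemma mrun_exists [NeZero n] (hc : c ∉ I) (hy : y ∈ I) :
    ∃ m : ℕ, y - ((m + 1 : ℕ) : ZMod n) ∉ I := by
  have hyc : y - c ≠ 0 := sub_ne_zero.mpr (fun h => hc (h ▸ hy))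
  have hv : 1 ≤ (y - c).val := Nat.pos_of_ne_zero (fun h0 => hyc ((ZMod.val_eq_zero _).mp h0))
  refine ⟨(y - c).val - 1, ?_⟩
  rw [show (y - c).val - 1 + 1 = (y - c).val by omega, natCast_val_cast, sub_sub_cancel]
  exact hc

open scoped Classical in
lemma mrun_spec (hex : ∃ m : ℕ, y - ((m + 1 : ℕ) : ZMod n) ∉ I) :
    y - ((mrun I y + 1 : ℕ) : ZMod n) ∉ I := by
  rw [mrun, dif_pos hex]
  exact Nat.find_spec hex

open scoped Classical in
lemma mrun_min (hex : ∃ m : ℕ, y - ((m + 1 : ℕ) : ZMod n) ∉ I) {j : ℕ} (hj : j < mrun I y) :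
    y - ((j + 1 : ℕ) : ZMod n) ∈ I := by
  rw [mrun, dif_pos hex] at hj
  exact not_not.mp (Nat.find_min hex hj)

lemma mem_of_le_mrun (hex : ∃ m : ℕ, y - ((m + 1 : ℕ) : ZMod n) ∉ I) (hy : y ∈ I)
    {j : ℕ} (hj : j ≤ mrun I y) : y - ((j : ℕ) : ZMod n) ∈ I := by
  rcases Nat.eq_zero_or_pos j with rfl | hj0
  · simpa using hy
  · have := mrun_min hex (show j - 1 < mrun I y by omega)
    rwa [show j - 1 + 1 = j by omega] at this

open scoped Classical in
lemma mrun_lt [NeZero n] (hc : c ∉ I) (hy : y ∈ I) : mrun I y < n := by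
  have hex := mrun_exists hc hy
  have hyc : y - c ≠ 0 := sub_ne_zero.mpr (fun h => hc (h ▸ hy))
  have hv : 1 ≤ (y - c).val := Nat.pos_of_ne_zero (fun h0 => hyc ((ZMod.val_eq_zero _).mp h0))
  have hwit : y - (((y - c).val - 1 + 1 : ℕ) : ZMod n) ∉ I := by
    rw [show (y - c).val - 1 + 1 = (y - c).val by omega, natCast_val_cast, sub_sub_cancel]
    exact hc
  have h1 : mrun I y ≤ (y - c).val - 1 := by
    rw [mrun, dif_pos hex]
    exact Nat.find_le hwit
  have := ZMod.val_lt (y - c)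
  omega

open scoped Classical in
lemma mrun_succ [NeZero n] (hc : c ∉ I) {u : ZMod n} (hu : u ∈ I) (hv : u + 1 ∈ I) :
    mrun I (u + 1) = mrun I u + 1 := by
  have hexu := mrun_exists hc hu
  have key : u + 1 - ((mrun I u + 1 + 1 : ℕ) : ZMod n) = u - ((mrun I u + 1 : ℕ) : ZMod n) := by
    push_cast; ring
  have hexv : ∃ m : ℕ, u + 1 - ((m + 1 : ℕ) : ZMod n) ∉ I :=
    ⟨mrun I u + 1, by rw [key]; exact mrun_spec hexu⟩
  rw [show mrun I (u + 1) = _ from dif_pos hexv]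
  rw [Nat.find_eq_iff]
  refine ⟨by rw [key]; exact mrun_spec hexu, ?_⟩
  intro j hj
  rw [not_not]
  rcases Nat.eq_zero_or_pos j with rfl | hj0
  · simpa using hu
  · have h2 : u + 1 - ((j + 1 : ℕ) : ZMod n) = u - ((j - 1 + 1 : ℕ) : ZMod n) := by
      rw [show ((j - 1 + 1 : ℕ) : ZMod n) = (j : ℕ) from by congr 1; omega]
      push_cast; ring
    rw [h2]
    exact mrun_min hexu (by omega)

noncomputable def runStart (I : Set (ZMod n)) (y : ZMod n) : ZMod n :=
  y - ((mrun I y : ℕ) : ZMod n)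

lemma runStart_mem (hex : ∃ m : ℕ, y - ((m + 1 : ℕ) : ZMod n) ∉ I) (hy : y ∈ I) :
    runStart I y ∈ I :=
  mem_of_le_mrun hex hy le_rfl

lemma runStart_pred_notMem (hex : ∃ m : ℕ, y - ((m + 1 : ℕ) : ZMod n) ∉ I) :
    runStart I y - 1 ∉ I := by
  have : runStart I y - 1 = y - ((mrun I y + 1 : ℕ) : ZMod n) := by
    rw [runStart]; push_cast; ring
  rw [this]
  exact mrun_spec hex

lemma runStart_spec (I : Set (ZMod n)) (y : ZMod n) :
    y = runStart I y + ((mrun I y : ℕ) : ZMod n) := by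
  rw [runStart]; ring

lemma runStart_succ [NeZero n] (hc : c ∉ I) {u : ZMod n} (hu : u ∈ I) (hv : u + 1 ∈ I) :
    runStart I (u + 1) = runStart I u := by
  rw [runStart, runStart, mrun_succ hc hu hv]
  push_cast; ring

lemma runStart_walk [NeZero n] (hc : c ∉ I) {u v : ↥I}
    (p : ((cycleGraph n).induce I).Walk u v) : runStart I ↑u = runStart I ↑v := by
  induction p with
  | nil => rfl
  | @cons u v w h p ih =>
    refine Eq.trans ?_ ih
    have hadj := (induce_adj'.mp h)
    rw [cycle_adj] at hadj
    rcases hadj.2 with h1 | h1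
    · have hv' : (↑u : ZMod n) + 1 ∈ I := h1 ▸ v.2
      rw [show (↑v : ZMod n) = ↑u + 1 from h1, runStart_succ hc u.2 hv']
    · have hu' : (↑v : ZMod n) + 1 ∈ I := h1 ▸ u.2
      rw [show (↑u : ZMod n) = ↑v + 1 from h1, runStart_succ hc v.2 hu']

end mrun

end StmtAux

namespace StmtAux

variable {n : ℕ}

lemma two_le_components_iff [NeZero n] (hn : 4 ≤ n) {I : Set (ZMod n)}
    (h1 : 2 ≤ I.ncard) (h2 : I.ncard ≤ n - 2) :
    2 ≤ Nat.card ((cycleGraph n).induce I).ConnectedComponent ↔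
      ¬ ∃ (a : ZMod n) (k : ℕ), I = ↑(intvF n a k) := by
  haveI : Finite ↥I := Set.toFinite I |>.to_subtype
  haveI : Finite ((cycleGraph n).induce I).ConnectedComponent :=
    Finite.of_surjective ((cycleGraph n).induce I).connectedComponentMk
      (fun c => Quot.exists_rep c)
  constructor
  · rintro hcard ⟨a, k, rfl⟩
    have hkn : k ≤ n := by
      by_contra h
      rw [intvF_univ (by omega : n ≤ k)] at h2
      rw [Finset.coe_univ, Set.ncard_univ, Nat.card_zmod] at h2
      omega
    have hk1 : 1 ≤ k := by
      rw [Set.ncard_coe_finset, card_intvF hkn] at h1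
      omega
    have hconn := intvF_connected (show 2 ≤ n by omega) a hk1 hkn
    have hsub : Subsingleton ((cycleGraph n).induce (↑(intvF n a k) : Set (ZMod n))).ConnectedComponent := by
      constructor
      exact SimpleGraph.ConnectedComponent.ind₂
        (fun u v => SimpleGraph.ConnectedComponent.sound (hconn.preconnected u v))
    have hne : Nonempty ((cycleGraph n).induce (↑(intvF n a k) : Set (ZMod n))).ConnectedComponent := by
      have : a ∈ (↑(intvF n a k) : Set (ZMod n)) := by
        exact Finset.mem_coe.mpr (mem_intvF.mpr ⟨0, by omega, by simp⟩)
      exact ⟨((cycleGraph n).induce _).connectedComponentMk ⟨a, this⟩⟩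
    have := Nat.card_eq_one_iff_unique.mpr ⟨hsub, hne⟩
    omega
  · intro hni
    by_contra hcard
    push_neg at hcard
    have hsub : Subsingleton ((cycleGraph n).induce I).ConnectedComponent :=
      Finite.card_le_one_iff_subsingleton.mp (by omega)
    -- I is nonempty and has nonempty complement
    have hne : I.Nonempty := by
      rcases I.eq_empty_or_nonempty with rfl | h
      · simp [Set.ncard_empty] at h1
      · exact h
    obtain ⟨y₀, hy₀⟩ := hne
    have hcne : ∃ c, c ∉ I := by
      by_contra h
      push_neg at h
      have : I = Set.univ := Set.eq_univ_of_forall h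
      rw [this, Set.ncard_univ, Nat.card_zmod] at h2
      omega
    obtain ⟨c, hc⟩ := hcne
    -- all elements of I have the same runStart
    have hstart : ∀ y ∈ I, runStart I y = runStart I y₀ := by
      intro y hy
      have hcomp : ((cycleGraph n).induce I).connectedComponentMk ⟨y, hy⟩ =
          ((cycleGraph n).induce I).connectedComponentMk ⟨y₀, hy₀⟩ := Subsingleton.elim _ _
      obtain ⟨p⟩ := SimpleGraph.ConnectedComponent.eq.mp hcomp
      exact runStart_walk hc p
    set x : ZMod n := runStart I y₀ with hxdef
    have hrepr : ∀ y ∈ I, y = x + ((mrun I y : ℕ) : ZMod n) := by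
      intro y hy
      rw [← hstart y hy]
      exact runStart_spec I y
    -- max of mrun over I
    have hIf : I.Finite := Set.toFinite I
    have hFne : (hIf.toFinset.image (mrun I)).Nonempty :=
      ⟨mrun I y₀, Finset.mem_image_of_mem _ (hIf.mem_toFinset.mpr hy₀)⟩
    set M : ℕ := (hIf.toFinset.image (mrun I)).max' hFne with hM
    apply hni
    refine ⟨x, M + 1, ?_⟩
    ext z
    simp only [Finset.mem_coe]
    constructor
    · intro hz
      refine mem_intvF.mpr ⟨mrun I z, ?_, hrepr z hz⟩
      have : mrun I z ≤ M :=
        Finset.le_max' _ _ (Finset.mem_image_of_mem _ (hIf.mem_toFinset.mpr hz))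
      omega
    · intro hz
      obtain ⟨i, hi, rfl⟩ := mem_intvF.mp hz
      obtain ⟨y', hy'mem, hy'⟩ := Finset.mem_image.mp (Finset.max'_mem _ hFne)
      have hy'I : y' ∈ I := hIf.mem_toFinset.mp hy'mem
      have hiM : i ≤ M := by omega
      have heq : x + ((i : ℕ) : ZMod n) = y' - ((M - i : ℕ) : ZMod n) := by
        rw [hrepr y' hy'I, hy']
        rw [Nat.cast_sub hiM]
        ring
      rw [heq]
      exact mem_of_le_mrun (mrun_exists hc hy'I) hy'I (by omega)

end StmtAux

theorem stmt2 (n : ℕ) (hn : 4 ≤ n) :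
    Set.ncard {C : Set (Set (ZMod n)) | ∃ I : Set (ZMod n),
        2 ≤ I.ncard ∧ I.ncard ≤ n - 2 ∧
        2 ≤ Nat.card ((cycleGraph n).induce I).ConnectedComponent ∧
        C = {I, Iᶜ}} = 2 ^ (n - 1) - n * (n - 1) / 2 - 1 := by
  haveI : NeZero n := ⟨by omega⟩
  classical
  set A : Finset (Finset (ZMod n)) :=
    Finset.univ.filter (fun s => 2 ≤ s.card ∧ s.card ≤ n - 2) with hA
  set N : Finset (Finset (ZMod n)) :=
    Finset.univ.filter (fun s : Finset (ZMod n) => ¬(2 ≤ s.card ∧ s.card ≤ n - 2)) with hN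
  set F : Finset (Finset (ZMod n)) :=
    A.filter (fun s => ¬ ∃ (a : ZMod n) (k : ℕ), s = StmtAux.intvF n a k) with hF
  set B : Finset (Finset (ZMod n)) :=
    (Finset.univ ×ˢ Finset.Icc 2 (n - 2)).image (fun p : ZMod n × ℕ => StmtAux.intvF n p.1 p.2) with hB
  have htot : Fintype.card (Finset (ZMod n)) = 2 ^ n := by
    rw [Fintype.card_finset, ZMod.card]
  have hAN : A.card + N.card = 2 ^ n := by
    rw [hA, hN, Finset.card_filter_add_card_filter_not, Finset.card_univ, htot]
  have hNcard : N.card = 2 * n + 2 := by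
    have hfib : ∀ s ∈ N, s.card ∈ ({0, 1, n - 1, n} : Finset ℕ) := by
      intro s hs
      rw [hN, Finset.mem_filter] at hs
      have hle : s.card ≤ n := by
        have := Finset.card_le_univ s
        rwa [ZMod.card] at this
      simp only [Finset.mem_insert, Finset.mem_singleton]
      omega
    have hsplit := Finset.card_eq_sum_card_fiberwise hfib
    have hfilter : ∀ b : ℕ, ¬(2 ≤ b ∧ b ≤ n - 2) →
        (N.filter (fun s => s.card = b)).card = n.choose b := by
      intro b hb
      have heq : N.filter (fun s => s.card = b) =
          Finset.univ.filter (fun s : Finset (ZMod n) => s.card = b) := by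
        ext s
        simp only [hN, Finset.mem_filter, Finset.mem_univ, true_and]
        constructor
        · rintro ⟨_, h⟩; exact h
        · intro h; exact ⟨by rw [h]; exact hb, h⟩
      rw [heq, ← Finset.powerset_univ, ← Finset.powersetCard_eq_filter,
        Finset.card_powersetCard, Finset.card_univ, ZMod.card]
    rw [hsplit]
    rw [show ({0, 1, n - 1, n} : Finset ℕ) = insert 0 (insert 1 (insert (n - 1) {n})) from rfl]
    rw [Finset.sum_insert (by simp; omega), Finset.sum_insert (by simp; omega),
      Finset.sum_insert (by simp; omega), Finset.sum_singleton]
    rw [hfilter 0 (by omega), hfilter 1 (by omega), hfilter (n - 1) (by omega),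
      hfilter n (by omega)]
    rw [Nat.choose_zero_right, Nat.choose_one_right, Nat.choose_self]
    have hc1 : n.choose (n - 1) = n := by
      have h := Nat.choose_symm (show n - 1 ≤ n by omega)
      rw [show n - (n - 1) = 1 by omega] at h
      rw [← h, Nat.choose_one_right]
    omega
  have hBcard : B.card = n * (n - 3) := by
    rw [hB, Finset.card_image_of_injOn, Finset.card_product, Finset.card_univ, ZMod.card,
      Nat.card_Icc, show n - 2 + 1 - 2 = n - 3 by omega]
    rintro ⟨a, k⟩ hak ⟨b, l⟩ hbl h
    simp only [Finset.coe_product, Set.mem_prod, Finset.mem_coe, Finset.mem_univ,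
      Finset.mem_Icc, true_and] at hak hbl
    obtain ⟨h1, h2⟩ := StmtAux.intvF_inj (by omega) (by omega) (by omega) (by omega) (by omega) h
    exact Prod.ext h1 h2
  have hBsub : B ⊆ A := by
    intro s hs
    rw [hB, Finset.mem_image] at hs
    obtain ⟨⟨a, k⟩, hak, rfl⟩ := hs
    simp only [Finset.mem_product, Finset.mem_Icc, Finset.mem_univ, true_and] at hak
    rw [hA, Finset.mem_filter]
    exact ⟨Finset.mem_univ _, by rw [StmtAux.card_intvF (by omega : k ≤ n)]; omega⟩
  have hFAB : F = A \ B := by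
    ext s
    rw [hF, Finset.mem_filter, Finset.mem_sdiff]
    constructor
    · rintro ⟨hsA, hs⟩
      refine ⟨hsA, fun hsB => hs ?_⟩
      rw [hB, Finset.mem_image] at hsB
      obtain ⟨⟨a, k⟩, -, rfl⟩ := hsB
      exact ⟨a, k, rfl⟩
    · rintro ⟨hsA, hsB⟩
      refine ⟨hsA, ?_⟩
      rintro ⟨a, k, rfl⟩
      apply hsB
      rw [hA, Finset.mem_filter] at hsA
      obtain ⟨-, hc1, hc2⟩ := hsA
      have hkn : k ≤ n := by
        by_contra h
        rw [StmtAux.intvF_univ (by omega : n ≤ k), Finset.card_univ, ZMod.card] at hc2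
        omega
      rw [StmtAux.card_intvF hkn] at hc1 hc2
      rw [hB, Finset.mem_image]
      refine ⟨(a, k), ?_, rfl⟩
      simp only [Finset.mem_product, Finset.mem_Icc, Finset.mem_univ, true_and]
      omega
  have hFcard : F.card = A.card - B.card := by rw [hFAB, Finset.card_sdiff_of_subset hBsub]
  have hcompl : ∀ s ∈ F, sᶜ ∈ F := by
    intro s hs
    rw [hFAB, Finset.mem_sdiff] at hs ⊢
    obtain ⟨hsA, hsB⟩ := hs
    rw [hA, Finset.mem_filter] at hsA
    obtain ⟨-, hc1, hc2⟩ := hsA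
    have hccard : sᶜ.card = n - s.card := by rw [Finset.card_compl, ZMod.card]
    constructor
    · rw [hA, Finset.mem_filter]
      exact ⟨Finset.mem_univ _, by omega, by omega⟩
    · intro hsB'
      apply hsB
      rw [hB, Finset.mem_image] at hsB' ⊢
      obtain ⟨⟨a, k⟩, hak, hs'⟩ := hsB'
      simp only [Finset.mem_product, Finset.mem_Icc, Finset.mem_univ, true_and] at hak
      have hs'' : StmtAux.intvF n a k = sᶜ := hs'
      have hseq : s = (StmtAux.intvF n a k)ᶜ := by rw [hs'', compl_compl]
      rw [StmtAux.compl_intvF (by omega : k ≤ n)] at hseq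
      refine ⟨(a + (k : ℕ), n - k), ?_, hseq.symm⟩
      simp only [Finset.mem_product, Finset.mem_Icc, Finset.mem_univ, true_and]
      omega
  set fS : Finset (ZMod n) → Set (Set (ZMod n)) :=
    fun s => {(↑s : Set (ZMod n)), (↑s : Set (ZMod n))ᶜ} with hfS
  have hself : ∀ s : Finset (ZMod n), (↑s : Set (ZMod n)) ∈ fS s := fun s => Set.mem_insert _ _
  have hfS_compl : ∀ s : Finset (ZMod n), fS sᶜ = fS s := by
    intro s
    rw [hfS]
    simp only [Finset.coe_compl, compl_compl]
    exact Set.pair_comm _ _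
  have hne_compl : ∀ s ∈ F, s ≠ sᶜ := by
    intro s hs heq
    rw [hFAB, Finset.mem_sdiff, hA, Finset.mem_filter] at hs
    obtain ⟨⟨-, hc1, -⟩, -⟩ := hs
    obtain ⟨x, hx⟩ := Finset.card_pos.mp (by omega : 0 < s.card)
    have : x ∈ sᶜ := heq ▸ hx
    exact (Finset.mem_compl.mp this) hx
  have hfiber : ∀ s ∈ F, F.filter (fun t => fS t = fS s) = {s, sᶜ} := by
    intro s hs
    ext t
    rw [Finset.mem_filter, Finset.mem_insert, Finset.mem_singleton]
    constructor
    · rintro ⟨htF, hts⟩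
      have hmem : (↑t : Set (ZMod n)) ∈ fS s := hts ▸ hself t
      rw [hfS] at hmem
      rcases hmem with h | h
      · left; exact Finset.coe_injective h
      · right; apply Finset.coe_injective; rw [Finset.coe_compl]; exact h
    · rintro (rfl | rfl)
      · exact ⟨hs, rfl⟩
      · exact ⟨hcompl s hs, hfS_compl s⟩
  have h2to1 : F.card = 2 * (F.image fS).card := by
    rw [Finset.card_eq_sum_card_fiberwise (fun s hs => Finset.mem_image_of_mem fS hs)]
    have hcards : ∀ b ∈ F.image fS, (F.filter (fun t => fS t = b)).card = 2 := by
      intro b hb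
      obtain ⟨s, hsF, rfl⟩ := Finset.mem_image.mp hb
      rw [hfiber s hsF, Finset.card_insert_of_notMem
        (by rw [Finset.mem_singleton]; exact hne_compl s hsF), Finset.card_singleton]
    rw [Finset.sum_congr rfl hcards, Finset.sum_const, smul_eq_mul, Nat.mul_comm]
  have hT : {C : Set (Set (ZMod n)) | ∃ I : Set (ZMod n),
        2 ≤ I.ncard ∧ I.ncard ≤ n - 2 ∧
        2 ≤ Nat.card ((cycleGraph n).induce I).ConnectedComponent ∧
        C = {I, Iᶜ}} = ↑(F.image fS) := by
    ext C
    simp only [Set.mem_setOf_eq, Finset.coe_image, Set.mem_image, Finset.mem_coe]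
    constructor
    · rintro ⟨I, hI1, hI2, hI3, rfl⟩
      have hIfin : I.Finite := Set.toFinite I
      have hcoe : (↑hIfin.toFinset : Set (ZMod n)) = I := hIfin.coe_toFinset
      have hccard : hIfin.toFinset.card = I.ncard := by rw [← Set.ncard_coe_finset, hcoe]
      refine ⟨hIfin.toFinset, ?_, ?_⟩
      · rw [hF, Finset.mem_filter, hA, Finset.mem_filter]
        refine ⟨⟨Finset.mem_univ _, by omega, by omega⟩, ?_⟩
        rintro ⟨a, k, hak⟩
        have hIeq : I = ↑(StmtAux.intvF n a k) := by rw [← hcoe, hak]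
        exact (StmtAux.two_le_components_iff hn hI1 hI2).mp hI3 ⟨a, k, hIeq⟩
      · rw [hfS]
        simp only [hcoe]
    · rintro ⟨s, hsF, rfl⟩
      rw [hF, Finset.mem_filter, hA, Finset.mem_filter] at hsF
      obtain ⟨⟨-, hc1, hc2⟩, hnint⟩ := hsF
      have hcard : (↑s : Set (ZMod n)).ncard = s.card := Set.ncard_coe_finset s
      refine ⟨↑s, by omega, by omega, ?_, rfl⟩
      refine (StmtAux.two_le_components_iff hn (by omega) (by omega)).mpr ?_
      rintro ⟨a, k, hak⟩
      exact hnint ⟨a, k, Finset.coe_injective hak⟩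
  rw [hT, Set.ncard_coe_finset]
  have hpow : 2 ^ n = 2 * 2 ^ (n - 1) := by
    rw [← pow_succ']
    congr 1
    omega
  have hbig : n * (n - 1) + 2 ≤ 2 ^ n := by
    have key : ∀ j : ℕ, (j + 4) * (j + 3) + 2 ≤ 2 ^ (j + 4) := by
      intro j
      induction j with
      | zero => norm_num
      | succ j ih =>
        calc (j + 1 + 4) * (j + 1 + 3) + 2 ≤ 2 * ((j + 4) * (j + 3) + 2) := by nlinarith
          _ ≤ 2 * 2 ^ (j + 4) := by omega
          _ = 2 ^ (j + 1 + 4) := by rw [show j + 1 + 4 = (j + 4) + 1 by omega, pow_succ]; ring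
    have := key (n - 4)
    rw [show n - 4 + 4 = n by omega, show n - 4 + 3 = n - 1 by omega] at this
    exact this
  have hsplit2 : n * (n - 1) = n * (n - 3) + 2 * n := by
    rw [show n - 1 = n - 3 + 2 by omega, Nat.mul_add]
    ring
  have heven : n * (n - 1) / 2 * 2 = n * (n - 1) := by
    apply Nat.div_two_mul_two_of_even
    have h := Nat.even_mul_succ_self (n - 1)
    rwa [show n - 1 + 1 = n by omega, Nat.mul_comm] at h
  rw [hpow] at hAN hbig
  generalize hP : (2 : ℕ) ^ (n - 1) = p at hAN hbig ⊢
  generalize hq : n * (n - 1) / 2 = q at heven ⊢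
  generalize hr : n * (n - 1) = r at hbig hsplit2 heven
  generalize hm : n * (n - 3) = m at hBcard hsplit2
  omega
end

section
/- Let σ ∈ S_n with n ≥ 3. There exist an element φ ∈ PGL₂(ℂ) of finite order and an injective function x : Fin n → ℙ¹(ℂ) with φ(x i) = x (σ i) for all i, if and only if σ is balanced, i.e., all nontrivial cycles of σ have the same length ℓ ≥ 2 (say there are k of them) and the number of fixed points n - kℓ of σ is at most 2. -/
open Projectivization Matrix Equiv

noncomputable section

lemma mk_eq_mk_of_eq {v w : Fin 2 → ℂ} (h : v = w) (hv : v ≠ 0) (hw : w ≠ 0) :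
    Projectivization.mk ℂ v hv = Projectivization.mk ℂ w hw := by subst h; rfl

lemma inv_mulVec_mulVec (g : GL (Fin 2) ℂ) (v : Fin 2 → ℂ) :
    ((g⁻¹ : GL (Fin 2) ℂ) : Matrix (Fin 2) (Fin 2) ℂ).mulVec
      (((g : Matrix (Fin 2) (Fin 2) ℂ)).mulVec v) = v := by
  rw [Matrix.mulVec_mulVec]
  have : ((g⁻¹ : GL (Fin 2) ℂ) : Matrix (Fin 2) (Fin 2) ℂ) * (g : Matrix (Fin 2) (Fin 2) ℂ)
      = 1 := g.inv_mul
  rw [this, Matrix.one_mulVec]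

lemma mulVec_inv_mulVec (g : GL (Fin 2) ℂ) (v : Fin 2 → ℂ) :
    ((g : Matrix (Fin 2) (Fin 2) ℂ)).mulVec
      (((g⁻¹ : GL (Fin 2) ℂ) : Matrix (Fin 2) (Fin 2) ℂ).mulVec v) = v := by
  rw [Matrix.mulVec_mulVec]
  have : (g : Matrix (Fin 2) (Fin 2) ℂ) * ((g⁻¹ : GL (Fin 2) ℂ) : Matrix (Fin 2) (Fin 2) ℂ)
      = 1 := g.mul_inv
  rw [this, Matrix.one_mulVec]

lemma glInj (g : GL (Fin 2) ℂ) :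
    Function.Injective ((g : Matrix (Fin 2) (Fin 2) ℂ)).mulVecLin := by
  intro u v h
  simp only [mulVecLin_apply] at h
  have h2 := congrArg (fun w => ((g⁻¹ : GL (Fin 2) ℂ) : Matrix (Fin 2) (Fin 2) ℂ).mulVec w) h
  simp only [inv_mulVec_mulVec] at h2
  exact h2

lemma glMulVec_ne_zero (g : GL (Fin 2) ℂ) {v : Fin 2 → ℂ} (hv : v ≠ 0) :
    ((g : Matrix (Fin 2) (Fin 2) ℂ)).mulVec v ≠ 0 := by
  intro h0
  have h1 : ((g : Matrix (Fin 2) (Fin 2) ℂ)).mulVecLin v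
      = ((g : Matrix (Fin 2) (Fin 2) ℂ)).mulVecLin 0 := by
    rw [mulVecLin_apply, h0, map_zero]
  exact hv (glInj g h1)

def permOfGL (g : GL (Fin 2) ℂ) : Equiv.Perm (Projectivization ℂ (Fin 2 → ℂ)) where
  toFun := Projectivization.map ((g : Matrix (Fin 2) (Fin 2) ℂ)).mulVecLin (glInj g)
  invFun := Projectivization.map (((g⁻¹ : GL (Fin 2) ℂ) : Matrix (Fin 2) (Fin 2) ℂ)).mulVecLin (glInj g⁻¹)
  left_inv p := by
    induction p using Projectivization.ind with
    | h v hv =>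
      rw [Projectivization.map_mk, Projectivization.map_mk]
      exact mk_eq_mk_of_eq (by simp only [mulVecLin_apply, inv_mulVec_mulVec]) _ _
  right_inv p := by
    induction p using Projectivization.ind with
    | h v hv =>
      rw [Projectivization.map_mk, Projectivization.map_mk]
      exact mk_eq_mk_of_eq (by simp only [mulVecLin_apply, mulVec_inv_mulVec]) _ _

lemma permOfGL_mk (g : GL (Fin 2) ℂ) (v : Fin 2 → ℂ) (hv : v ≠ 0) :
    ∃ hv' : ((g : Matrix (Fin 2) (Fin 2) ℂ)).mulVec v ≠ 0,
      permOfGL g (Projectivization.mk ℂ v hv)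
        = Projectivization.mk ℂ (((g : Matrix (Fin 2) (Fin 2) ℂ)).mulVec v) hv' := by
  refine ⟨glMulVec_ne_zero g hv, ?_⟩
  have h1 : permOfGL g (Projectivization.mk ℂ v hv)
      = Projectivization.map ((g : Matrix (Fin 2) (Fin 2) ℂ)).mulVecLin (glInj g)
          (Projectivization.mk ℂ v hv) := rfl
  rw [h1, Projectivization.map_mk]
  exact mk_eq_mk_of_eq (mulVecLin_apply _ _) _ _

lemma phi_pow_mk (φ : Equiv.Perm (Projectivization ℂ (Fin 2 → ℂ))) (g : GL (Fin 2) ℂ)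
    (hg : ∀ v (hv : v ≠ 0), ∃ hv', φ (Projectivization.mk ℂ v hv)
        = Projectivization.mk ℂ ((g : Matrix (Fin 2) (Fin 2) ℂ).mulVec v) hv')
    (k : ℕ) (v : Fin 2 → ℂ) (hv : v ≠ 0) :
    ∃ hv' : (((g : Matrix (Fin 2) (Fin 2) ℂ))^k).mulVec v ≠ 0,
      (φ^k) (Projectivization.mk ℂ v hv)
        = Projectivization.mk ℂ ((((g : Matrix (Fin 2) (Fin 2) ℂ))^k).mulVec v) hv' := by
  induction k with
  | zero =>
    refine ⟨by simpa using hv, ?_⟩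
    conv_lhs => rw [pow_zero]
    rw [Equiv.Perm.one_apply]
    exact (mk_eq_mk_of_eq (by rw [pow_zero, Matrix.one_mulVec]) _ _).symm
  | succ k ih =>
    obtain ⟨h1, e1⟩ := ih
    obtain ⟨h2, e2⟩ := hg _ h1
    have hveq : (((g : Matrix (Fin 2) (Fin 2) ℂ))^(k+1)).mulVec v
        = ((g : Matrix (Fin 2) (Fin 2) ℂ)).mulVec ((((g : Matrix (Fin 2) (Fin 2) ℂ))^k).mulVec v) := by
      rw [Matrix.mulVec_mulVec, ← pow_succ']
    refine ⟨hveq ▸ h2, ?_⟩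
    rw [pow_succ', Equiv.Perm.mul_apply, e1, e2]
    exact mk_eq_mk_of_eq hveq.symm _ _

-- ### cycle theory helpers

variable {n : ℕ}

lemma perm_pow_fix {α : Type*} (f : Equiv.Perm α) (x : α) (h : f x = x) (q : ℕ) :
    (f ^ q) x = x := by
  induction q with
  | zero => simp
  | succ q ih => rw [pow_succ, Equiv.Perm.mul_apply, h, ih]

lemma pow_apply_eq_self_iff (σ : Equiv.Perm (Fin n)) {i : Fin n} (h : σ i ≠ i) (k : ℕ) :
    (σ ^ k) i = i ↔ orderOf (σ.cycleOf i) ∣ k := by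
  rw [← Equiv.Perm.cycleOf_pow_apply_self,
    ← (Equiv.Perm.isCycle_cycleOf σ h).pow_eq_one_iff'
      (x := i) (by rwa [Equiv.Perm.cycleOf_apply_self]),
    orderOf_dvd_iff_pow_eq_one]

lemma orbit_ncard_eq (σ : Equiv.Perm (Fin n)) {i : Fin n} (h : σ i ≠ i) :
    Set.ncard {j | ∃ k : ℤ, (σ ^ k) i = j} = orderOf (σ.cycleOf i) := by
  have hset : {j | ∃ k : ℤ, (σ ^ k) i = j} = ↑(σ.cycleOf i).support := by
    ext j
    rw [Finset.mem_coe, Equiv.Perm.mem_support_cycleOf_iff' h]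
    exact Iff.rfl
  rw [hset, Set.ncard_coe_finset, (Equiv.Perm.isCycle_cycleOf σ h).orderOf]

lemma pow_mod_apply (σ : Equiv.Perm (Fin n)) {ℓ : ℕ} {w : Fin n} (hw : (σ ^ ℓ) w = w) (c : ℕ) :
    (σ ^ c) w = (σ ^ (c % ℓ)) w := by
  conv_lhs => rw [← Nat.mod_add_div c ℓ]
  rw [pow_add, Equiv.Perm.mul_apply, pow_mul, perm_pow_fix _ _ hw]

lemma pow_apply_congr (σ : Equiv.Perm (Fin n)) {ℓ : ℕ} (hl0 : ℓ ≠ 0) {w : Fin n}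
    (hord : ∀ k : ℕ, (σ ^ k) w = w ↔ ℓ ∣ k) {a b : ℕ} (h : (σ ^ a) w = (σ ^ b) w) :
    a % ℓ = b % ℓ := by
  have hred : ∀ c : ℕ, (σ ^ c) w = (σ ^ (c % ℓ)) w := by
    intro c
    conv_lhs => rw [← Nat.mod_add_div c ℓ]
    rw [pow_add, Equiv.Perm.mul_apply, pow_mul]
    rw [perm_pow_fix (σ ^ ℓ) w ((hord ℓ).2 dvd_rfl)]
  have key : ∀ s t : ℕ, s ≤ t → t < ℓ → (σ ^ s) w = (σ ^ t) w → s = t := by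
    intro s t hst htl he
    have h1 : (σ ^ s) ((σ ^ (t - s)) w) = (σ ^ s) w := by
      rw [← Equiv.Perm.mul_apply, ← pow_add]
      rw [show s + (t - s) = t by omega, he]
    have h2 : (σ ^ (t - s)) w = w := (Equiv.injective _) h1
    have h3 := (hord _).1 h2
    have h4 : t - s = 0 := (Nat.eq_zero_of_dvd_of_lt h3 (by omega))
    omega
  have ha := hred a
  have hb := hred b
  rcases le_total (a % ℓ) (b % ℓ) with hle | hle
  · exact key _ _ hle (Nat.mod_lt _ (Nat.pos_of_ne_zero hl0)) (by rw [← ha, ← hb, h])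
  · exact (key _ _ hle (Nat.mod_lt _ (Nat.pos_of_ne_zero hl0)) (by rw [← ha, ← hb, h.symm])).symm


-- ### backward direction

lemma backward (n : ℕ) (σ : Equiv.Perm (Fin n)) (hσ : σ ≠ 1) (ℓ : ℕ) (hl : 2 ≤ ℓ)
    (hcyc : ∀ i : Fin n, σ i ≠ i →
      Set.ncard {j : Fin n | ∃ k : ℤ, (σ ^ k) i = j} = ℓ)
    (hfix : Set.ncard {i : Fin n | σ i = i} ≤ 2) :
    ∃ (φ : Equiv.Perm (Projectivization ℂ (Fin 2 → ℂ)))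
       (g : Matrix.GeneralLinearGroup (Fin 2) ℂ)
       (x : Fin n → Projectivization ℂ (Fin 2 → ℂ)),
        (∀ (v : Fin 2 → ℂ) (hv : v ≠ 0),
          ∃ hv' : Matrix.mulVec (g : Matrix (Fin 2) (Fin 2) ℂ) v ≠ 0,
            φ (Projectivization.mk ℂ v hv)
              = Projectivization.mk ℂ (Matrix.mulVec (g : Matrix (Fin 2) (Fin 2) ℂ) v) hv') ∧
        IsOfFinOrder φ ∧ Function.Injective x ∧ ∀ i, φ (x i) = x (σ i) := by
  classical
  have hl0 : ℓ ≠ 0 := by omega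
  -- the root of unity and the matrix
  set ζ : ℂ := Complex.exp (2 * Real.pi * Complex.I / ℓ) with hζdef
  have hζ : IsPrimitiveRoot ζ ℓ := Complex.isPrimitiveRoot_exp ℓ hl0
  have hζ1 : ζ ^ ℓ = 1 := hζ.pow_eq_one
  have hζ0 : ζ ≠ 0 := hζ.ne_zero hl0
  have hζabs : ‖ζ‖ = 1 := by
    rw [hζdef, show (2 * ↑Real.pi * Complex.I / (ℓ:ℂ)) = ((2 * Real.pi / ℓ : ℝ) : ℂ) * Complex.I
      by push_cast; ring, Complex.norm_exp_ofReal_mul_I]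
  set A : Matrix (Fin 2) (Fin 2) ℂ := Matrix.diagonal ![ζ, 1] with hAdef
  set B : Matrix (Fin 2) (Fin 2) ℂ := Matrix.diagonal ![ζ⁻¹, 1] with hBdef
  have hAB : A * B = 1 := by
    rw [hAdef, hBdef, Matrix.diagonal_mul_diagonal]
    have h1 : (![ζ, 1] * ![ζ⁻¹, 1] : Fin 2 → ℂ) = 1 := by
      funext j
      fin_cases j <;> simp [mul_inv_cancel₀ hζ0]
    exact (congrArg Matrix.diagonal h1).trans Matrix.diagonal_one
  have hBA : B * A = 1 := by
    rw [hAdef, hBdef, Matrix.diagonal_mul_diagonal]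
    have h1 : (![ζ⁻¹, 1] * ![ζ, 1] : Fin 2 → ℂ) = 1 := by
      funext j
      fin_cases j <;> simp [inv_mul_cancel₀ hζ0]
    exact (congrArg Matrix.diagonal h1).trans Matrix.diagonal_one
  set g : GL (Fin 2) ℂ := ⟨A, B, hAB, hBA⟩ with hgdef
  have hgA : (g : Matrix (Fin 2) (Fin 2) ℂ) = A := rfl
  set φ := permOfGL g with hφdef
  have hg : ∀ (v : Fin 2 → ℂ) (hv : v ≠ 0),
      ∃ hv' : Matrix.mulVec (g : Matrix (Fin 2) (Fin 2) ℂ) v ≠ 0,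
        φ (Projectivization.mk ℂ v hv)
          = Projectivization.mk ℂ (Matrix.mulVec (g : Matrix (Fin 2) (Fin 2) ℂ) v) hv' :=
    fun v hv => permOfGL_mk g v hv
  have hAmul : ∀ v : Fin 2 → ℂ, A.mulVec v = ![ζ * v 0, v 1] := by
    intro v
    funext j
    fin_cases j <;> simp [hAdef, Matrix.mulVec_diagonal]
  have hAl : A ^ ℓ = 1 := by
    rw [hAdef, Matrix.diagonal_pow]
    have h1 : (![ζ, 1] : Fin 2 → ℂ) ^ ℓ = 1 := by
      funext j
      fin_cases j <;> simp [hζ1]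
    exact (congrArg Matrix.diagonal h1).trans Matrix.diagonal_one
  have hφl : φ ^ ℓ = 1 := by
    ext p
    induction p using Projectivization.ind with
    | h v hv =>
      obtain ⟨hv', e⟩ := phi_pow_mk φ g hg ℓ v hv
      rw [Equiv.Perm.one_apply, e]
      exact mk_eq_mk_of_eq (by rw [hgA, hAl, Matrix.one_mulVec]) _ _
  have hφfin : IsOfFinOrder φ := isOfFinOrder_iff_pow_eq_one.mpr ⟨ℓ, by omega, hφl⟩
  -- facts about σ
  have hord : ∀ i : Fin n, σ i ≠ i → orderOf (σ.cycleOf i) = ℓ := by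
    intro i h
    rw [← orbit_ncard_eq σ h]
    exact hcyc i h
  have hper : ∀ i : Fin n, σ i ≠ i → ∀ k : ℕ, ((σ ^ k) i = i ↔ ℓ ∣ k) := by
    intro i h k
    rw [pow_apply_eq_self_iff σ h, hord i h]
  -- representatives of cycles
  have hmemself : ∀ i : Fin n, σ i ≠ i → i ∈ (σ.cycleOf i).support := by
    intro i h
    rw [Equiv.Perm.mem_support_cycleOf_iff' h]
  set R : Fin n → Fin n := fun i =>
    if h : σ i = i then i else (σ.cycleOf i).support.min' ⟨i, hmemself i h⟩ with hRdef
  have hRfixval : ∀ i, σ i = i → R i = i := by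
    intro i h
    simp only [hRdef, dif_pos h]
  have hRmem : ∀ i, σ i ≠ i → R i ∈ (σ.cycleOf i).support := by
    intro i h
    simp only [hRdef, dif_neg h]
    exact Finset.min'_mem _ _
  have hRsame : ∀ i, σ i ≠ i → σ.SameCycle i (R i) := by
    intro i h
    exact (Equiv.Perm.mem_support_cycleOf_iff' h).1 (hRmem i h)
  have hRnonfix : ∀ i, σ i ≠ i → σ (R i) ≠ R i := by
    intro i h
    exact Equiv.Perm.mem_support.1 (Equiv.Perm.support_cycleOf_le σ i (hRmem i h))
  have hσnonfix : ∀ i : Fin n, σ i ≠ i → σ (σ i) ≠ σ i := fun i h h' => h (σ.injective h')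
  have hRσ : ∀ i, σ i ≠ i → R (σ i) = R i := by
    intro i h
    have hc : σ.cycleOf (σ i) = σ.cycleOf i := Equiv.Perm.cycleOf_self_apply σ i
    simp only [hRdef, dif_neg (hσnonfix i h), dif_neg h, hc]
  -- position within the cycle
  have hex : ∀ i : Fin n, ∃ t : ℕ, (σ ^ t) (R i) = i := by
    intro i
    by_cases h : σ i = i
    · exact ⟨0, by simp [hRfixval i h]⟩
    · obtain ⟨t, _, ht⟩ := (hRsame i h).symm.exists_pow_eq'
      exact ⟨t, ht⟩
  set pos : Fin n → ℕ := fun i => Nat.find (hex i) with hposdef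
  have hpos_spec : ∀ i, (σ ^ pos i) (R i) = i := fun i => Nat.find_spec (hex i)
  have hpos_lt : ∀ i, σ i ≠ i → pos i < ℓ := by
    intro i h
    obtain ⟨t, ht⟩ := hex i
    have hRfixℓ : (σ ^ ℓ) (R i) = R i := (hper (R i) (hRnonfix i h) ℓ).2 dvd_rfl
    have ht' : (σ ^ (t % ℓ)) (R i) = i := by
      rw [← pow_mod_apply σ hRfixℓ t]
      exact ht
    have h1 : pos i ≤ t % ℓ := Nat.find_min' (hex i) ht'
    have h2 : t % ℓ < ℓ := Nat.mod_lt _ (by omega)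
    omega
  have hζmod : ∀ a : ℕ, ζ ^ a = ζ ^ (a % ℓ) := by
    intro a
    conv_lhs => rw [← Nat.mod_add_div a ℓ]
    rw [pow_add, pow_mul, hζ1, one_pow, mul_one]
  have hstep : ∀ i, σ i ≠ i → ζ ^ pos (σ i) = ζ * ζ ^ pos i := by
    intro i h
    have h1 : (σ ^ (pos i + 1)) (R i) = σ i := by
      rw [pow_succ', Equiv.Perm.mul_apply, hpos_spec i]
    have h2 : (σ ^ pos (σ i)) (R i) = σ i := by
      have h3 := hpos_spec (σ i)
      rwa [hRσ i h] at h3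
    have hcong : pos (σ i) % ℓ = (pos i + 1) % ℓ :=
      pow_apply_congr σ hl0 (hper (R i) (hRnonfix i h)) (h2.trans h1.symm)
    rw [hζmod (pos (σ i)), hcong, ← hζmod, pow_succ']
  -- the complex invariants
  set f : Fin n → ℂ := fun i => (2 : ℂ) ^ (R i : ℕ) * ζ ^ pos i with hfdef
  have h2ne : ∀ k : ℕ, ((2:ℂ)) ^ k ≠ 0 := fun k => pow_ne_zero k two_ne_zero
  have hf0 : ∀ i, f i ≠ 0 := fun i => mul_ne_zero (h2ne _) (pow_ne_zero _ hζ0)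
  have hfabs : ∀ i, ‖f i‖ = 2 ^ (R i : ℕ) := by
    intro i
    simp only [hfdef]
    rw [norm_mul, norm_pow, norm_pow, hζabs, Complex.norm_two, one_pow, mul_one]
  have hfstep : ∀ i, σ i ≠ i → f (σ i) = ζ * f i := by
    intro i h
    simp only [hfdef]
    rw [hRσ i h, hstep i h]
    ring
  have hfinj : ∀ i j, σ i ≠ i → σ j ≠ j → f i = f j → i = j := by
    intro i j hi hj he
    have habs : ((2:ℝ)) ^ (R i : ℕ) = 2 ^ (R j : ℕ) := by
      rw [← hfabs i, ← hfabs j, he]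
    have hR : R i = R j := by
      have hc : ((2 ^ (R i : ℕ) : ℕ) : ℝ) = ((2 ^ (R j : ℕ) : ℕ) : ℝ) := by
        push_cast
        exact habs
      exact Fin.ext (Nat.pow_right_injective (le_refl 2) (Nat.cast_injective hc))
    have hzeta : ζ ^ pos i = ζ ^ pos j := by
      have he2 := he
      simp only [hfdef] at he2
      rw [hR] at he2
      exact mul_left_cancel₀ (h2ne _) he2
    have hp := hζ.pow_inj (hpos_lt i hi) (hpos_lt j hj) hzeta
    rw [← hpos_spec i, ← hpos_spec j, hp, hR]
  -- the fixed points
  set F : Finset (Fin n) := Finset.univ.filter (fun i => σ i = i) with hFdef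
  have hFcard : F.card ≤ 2 := by
    have hset : {i : Fin n | σ i = i} = ↑F := by
      ext i
      simp [hFdef]
    rwa [hset, Set.ncard_coe_finset] at hfix
  have hmemF : ∀ i, σ i = i → i ∈ F := by
    intro i h
    simp [hFdef, h]
  have hv1 : ∀ c : ℂ, (![c, 1] : Fin 2 → ℂ) ≠ 0 := by
    intro c h
    have := congrFun h 1
    simp at this
  have h10 : (![1, 0] : Fin 2 → ℂ) ≠ 0 := by
    intro h
    have := congrFun h 0
    simp at this
  have h01 : (![0, 1] : Fin 2 → ℂ) ≠ 0 := by
    intro h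
    have := congrFun h 1
    simp at this
  set pA : Projectivization ℂ (Fin 2 → ℂ) := Projectivization.mk ℂ ![1, 0] h10 with hpAdef
  set pB : Projectivization ℂ (Fin 2 → ℂ) := Projectivization.mk ℂ ![0, 1] h01 with hpBdef
  have hpAB : pA ≠ pB := by
    intro heq
    rw [hpAdef, hpBdef, Projectivization.mk_eq_mk_iff'] at heq
    obtain ⟨a, ha⟩ := heq
    have := congrFun ha 0
    simp at this
  have hApt : ∀ c : ℂ, pA ≠ Projectivization.mk ℂ ![c, 1] (hv1 c) := by
    intro c heq
    rw [hpAdef, Projectivization.mk_eq_mk_iff'] at heq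
    obtain ⟨a, ha⟩ := heq
    have h1 := congrFun ha 1
    have h0 := congrFun ha 0
    simp at h1 h0
    rw [h1] at h0
    simp at h0
  have hBpt : ∀ c : ℂ, c ≠ 0 → pB ≠ Projectivization.mk ℂ ![c, 1] (hv1 c) := by
    intro c hc heq
    rw [hpBdef, Projectivization.mk_eq_mk_iff'] at heq
    obtain ⟨a, ha⟩ := heq
    have h1 := congrFun ha 1
    have h0 := congrFun ha 0
    simp at h1 h0
    rw [h1] at h0
    simp at h0
    exact hc h0
  set x : Fin n → Projectivization ℂ (Fin 2 → ℂ) := fun i =>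
    if h : σ i = i then
      (if (Fin.castLE hFcard (F.equivFin ⟨i, hmemF i h⟩)) = 0 then pA else pB)
    else Projectivization.mk ℂ ![f i, 1] (hv1 (f i)) with hxdef
  refine ⟨φ, g, x, hg, hφfin, ?_, ?_⟩
  · -- injectivity
    intro i j hij
    by_cases hi : σ i = i <;> by_cases hj : σ j = j
    · simp only [hxdef, dif_pos hi, dif_pos hj] at hij
      have hidx : Fin.castLE hFcard (F.equivFin ⟨i, hmemF i hi⟩)
          = Fin.castLE hFcard (F.equivFin ⟨j, hmemF j hj⟩) := by
        by_cases ha : Fin.castLE hFcard (F.equivFin ⟨i, hmemF i hi⟩) = 0 <;>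
          by_cases hb : Fin.castLE hFcard (F.equivFin ⟨j, hmemF j hj⟩) = 0
        · rw [ha, hb]
        · rw [if_pos ha, if_neg hb] at hij
          exact absurd hij hpAB
        · rw [if_neg ha, if_pos hb] at hij
          exact absurd hij.symm hpAB
        · have ha1 : Fin.castLE hFcard (F.equivFin ⟨i, hmemF i hi⟩) = 1 := by
            omega
          have hb1 : Fin.castLE hFcard (F.equivFin ⟨j, hmemF j hj⟩) = 1 := by
            omega
          rw [ha1, hb1]
      have h2 := F.equivFin.injective (Fin.castLE_injective hFcard hidx)
      exact congrArg Subtype.val h2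
    · exfalso
      simp only [hxdef, dif_pos hi, dif_neg hj] at hij
      by_cases ha : Fin.castLE hFcard (F.equivFin ⟨i, hmemF i hi⟩) = 0
      · rw [if_pos ha] at hij
        exact hApt (f j) hij
      · rw [if_neg ha] at hij
        exact hBpt (f j) (hf0 j) hij
    · exfalso
      simp only [hxdef, dif_neg hi, dif_pos hj] at hij
      by_cases ha : Fin.castLE hFcard (F.equivFin ⟨j, hmemF j hj⟩) = 0
      · rw [if_pos ha] at hij
        exact hApt (f i) hij.symm
      · rw [if_neg ha] at hij
        exact hBpt (f i) (hf0 i) hij.symm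
    · simp only [hxdef, dif_neg hi, dif_neg hj, Projectivization.mk_eq_mk_iff'] at hij
      obtain ⟨a, ha⟩ := hij
      have h1 := congrFun ha 1
      have h0 := congrFun ha 0
      simp at h1 h0
      rw [h1] at h0
      simp at h0
      exact hfinj i j hi hj h0.symm
  · -- equivariance
    intro i
    by_cases h : σ i = i
    · have hxi : x (σ i) = x i := by rw [h]
      rw [hxi]
      simp only [hxdef, dif_pos h]
      by_cases ha : Fin.castLE hFcard (F.equivFin ⟨i, hmemF i h⟩) = 0
      · rw [if_pos ha]
        obtain ⟨hv', e⟩ := hg ![1, 0] h10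
        rw [hpAdef, e]
        have e2 : (g : Matrix (Fin 2) (Fin 2) ℂ) *ᵥ ![1, 0] = ζ • ![1, (0:ℂ)] := by
          rw [hgA, hAmul]
          funext k
          fin_cases k <;> simp
        refine (mk_eq_mk_of_eq e2 _ (smul_ne_zero hζ0 h10)).trans ?_
        exact (Projectivization.mk_eq_mk_iff' ℂ _ _ _ h10).2 ⟨ζ, rfl⟩
      · rw [if_neg ha]
        obtain ⟨hv', e⟩ := hg ![0, 1] h01
        rw [hpBdef, e]
        refine mk_eq_mk_of_eq ?_ _ h01
        rw [hgA, hAmul]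
        funext k
        fin_cases k <;> simp
    · simp only [hxdef, dif_neg h, dif_neg (hσnonfix i h)]
      obtain ⟨hv', e⟩ := hg ![f i, 1] (hv1 (f i))
      rw [e]
      refine mk_eq_mk_of_eq ?_ _ (hv1 (f (σ i)))
      rw [hgA, hAmul]
      funext k
      fin_cases k <;> simp [hfstep i h]

-- ### forward direction: structure of finite-order elements of PGL₂
lemma pgl_structure (φ : Equiv.Perm (Projectivization ℂ (Fin 2 → ℂ)))
    (g : GL (Fin 2) ℂ)
    (hg : ∀ (v : Fin 2 → ℂ) (hv : v ≠ 0),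
      ∃ hv' : Matrix.mulVec (g : Matrix (Fin 2) (Fin 2) ℂ) v ≠ 0,
        φ (Projectivization.mk ℂ v hv)
          = Projectivization.mk ℂ (Matrix.mulVec (g : Matrix (Fin 2) (Fin 2) ℂ) v) hv')
    (hfin : IsOfFinOrder φ) (hφ1 : φ ≠ 1) :
    ∃ (p₁ p₂ : Projectivization ℂ (Fin 2 → ℂ)),
      2 ≤ orderOf φ ∧
      (∀ p, φ p = p → p = p₁ ∨ p = p₂) ∧
      (∀ p, φ p ≠ p → ∀ k : ℕ, ((φ ^ k) p = p ↔ orderOf φ ∣ k)) := by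
  classical
  set m := orderOf φ with hmdef
  have hm1 : φ ^ m = 1 := pow_orderOf_eq_one φ
  have hmpos : 0 < m := hfin.orderOf_pos
  have hm2 : 2 ≤ m := by
    rcases Nat.lt_or_ge m 2 with h | h
    · have hm1' : m = 1 := by omega
      exact absurd (orderOf_eq_one_iff.1 hm1') hφ1
    · exact h
  set A : Matrix (Fin 2) (Fin 2) ℂ := (g : Matrix (Fin 2) (Fin 2) ℂ) with hAdef
  obtain ⟨μ₁, hμ₁⟩ := Module.End.exists_eigenvalue (A.mulVecLin)
  obtain ⟨v₁, hv₁⟩ := hμ₁.exists_hasEigenvector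
  have hv₁0 : v₁ ≠ 0 := hv₁.right
  have hTv₁ : A *ᵥ v₁ = μ₁ • v₁ := by
    have h := hv₁.apply_eq_smul
    rwa [mulVecLin_apply] at h
  have hμ₁0 : μ₁ ≠ 0 := by
    intro h
    apply glMulVec_ne_zero g hv₁0
    rw [show (g : Matrix (Fin 2) (Fin 2) ℂ) *ᵥ v₁ = A *ᵥ v₁ from rfl, hTv₁, h, zero_smul]
  -- a companion vector independent from v₁
  obtain ⟨j, hj⟩ := Function.ne_iff.1 hv₁0
  simp only [Pi.zero_apply] at hj
  set j' : Fin 2 := if j = 0 then 1 else 0 with hj'def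
  have hjj' : j' ≠ j := by
    by_cases h : j = 0
    · rw [hj'def, if_pos h, h]
      exact one_ne_zero
    · rw [hj'def, if_neg h]
      exact fun h' => h h'.symm
  have hother : ∀ k : Fin 2, k ≠ j → k = j' := by
    intro k hk
    apply Fin.ext
    have h1 : (k : ℕ) < 2 := k.isLt
    have h2 : (j : ℕ) < 2 := j.isLt
    have h3 : (k : ℕ) ≠ (j : ℕ) := fun h => hk (Fin.ext h)
    by_cases h : j = 0
    · rw [hj'def, if_pos h]
      have : (j : ℕ) = 0 := by rw [h]; rfl
      simp only [Fin.val_one]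
      omega
    · rw [hj'def, if_neg h]
      have : (j : ℕ) ≠ 0 := fun h' => h (Fin.ext h')
      simp only [Fin.val_zero]
      omega
  set w : Fin 2 → ℂ := fun k => if k = j then 0 else 1 with hwdef
  have hwj : w j = 0 := by simp [hwdef]
  have hwj' : w j' = 1 := by simp [hwdef, hjj']
  have hw0 : w ≠ 0 := by
    intro h
    have := congrFun h j'
    rw [hwj'] at this
    exact one_ne_zero this
  have hdecw : ∀ u : Fin 2 → ℂ, ∃ a b : ℂ, u = a • v₁ + b • w := by
    intro u
    refine ⟨u j / v₁ j, u j' - u j / v₁ j * v₁ j', ?_⟩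
    funext k
    simp only [Pi.add_apply, Pi.smul_apply, smul_eq_mul]
    by_cases hk : k = j
    · subst hk
      rw [hwj, mul_zero, add_zero, div_mul_cancel₀ _ hj]
    · rw [hother k hk, hwj']
      ring
  have huniqw : ∀ a b : ℂ, a • v₁ + b • w = 0 → a = 0 ∧ b = 0 := by
    intro a b h
    have h1 := congrFun h j
    have h2 := congrFun h j'
    simp only [Pi.add_apply, Pi.smul_apply, smul_eq_mul, Pi.zero_apply, hwj, hwj',
      mul_zero, add_zero, mul_one] at h1 h2
    have ha : a = 0 := by
      rcases mul_eq_zero.1 h1 with h' | h'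
      · exact h'
      · exact absurd h' hj
    refine ⟨ha, ?_⟩
    rw [ha, zero_mul, zero_add] at h2
    exact h2
  obtain ⟨α, β, hTw⟩ := hdecw (A *ᵥ w)
  have heigpow : ∀ (u : Fin 2 → ℂ) (μ : ℂ), A *ᵥ u = μ • u → ∀ k : ℕ,
      (A ^ k) *ᵥ u = (μ ^ k) • u := by
    intro u μ hu k
    induction k with
    | zero => simp
    | succ k ih =>
      rw [pow_succ', ← Matrix.mulVec_mulVec, ih, Matrix.mulVec_smul, hu]
      match_scalars
      ring
  -- rule out the non-semisimple / scalar cases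
  by_cases hβμ : β = μ₁
  · exfalso
    subst hβμ
    by_cases hα : α = 0
    · -- scalar matrix : φ = 1
      subst hα
      apply hφ1
      have hall : ∀ u : Fin 2 → ℂ, A *ᵥ u = β • u := by
        intro u
        obtain ⟨a, b, hu⟩ := hdecw u
        rw [hu, Matrix.mulVec_add, Matrix.mulVec_smul, Matrix.mulVec_smul, hTv₁, hTw]
        match_scalars <;> ring
      ext p
      induction p using Projectivization.ind with
      | h v hv =>
        obtain ⟨hv', e⟩ := hg v hv
        rw [Equiv.Perm.one_apply, e]
        refine (mk_eq_mk_of_eq (by rw [show (g : Matrix (Fin 2) (Fin 2) ℂ) *ᵥ v = A *ᵥ v from rfl, hall v]) _ ?_).trans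
          ((Projectivization.mk_eq_mk_iff' ℂ _ _ _ hv).2 ⟨β, rfl⟩)
        rw [← hall v]
        exact hv'
    · -- Jordan block : infinite order, contradiction
      set c : ℕ → ℂ := fun k => k * α * β ^ k / β with hcdef
      have hAkw : ∀ k : ℕ, (A ^ k) *ᵥ w = c k • v₁ + (β ^ k) • w := by
        intro k
        induction k with
        | zero =>
          have hc0 : c 0 = 0 := by simp [hcdef]
          rw [hc0]
          simp
        | succ k ih =>
          rw [pow_succ', ← Matrix.mulVec_mulVec, ih, Matrix.mulVec_add, Matrix.mulVec_smul,
            Matrix.mulVec_smul, hTv₁, hTw]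
          have hc : c (k + 1) = c k * β + β ^ k * α := by
            rw [hcdef]
            field_simp
            push_cast
            ring
          rw [hc]
          match_scalars <;> ring
      obtain ⟨hnz, he⟩ := phi_pow_mk φ g hg m w hw0
      have hmm : Projectivization.mk ℂ ((((g : Matrix (Fin 2) (Fin 2) ℂ))^m) *ᵥ w) hnz
          = Projectivization.mk ℂ w hw0 := by
        rw [← he, hm1, Equiv.Perm.one_apply]
      rw [Projectivization.mk_eq_mk_iff'] at hmm
      obtain ⟨a, ha⟩ := hmm
      have h3 : c m • v₁ + (β ^ m) • w = a • w := by
        rw [← hAkw m]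
        exact ha.symm
      have h4 : c m • v₁ + (β ^ m - a) • w = 0 := by
        linear_combination (norm := module) h3
      obtain ⟨hc0, -⟩ := huniqw _ _ h4
      rw [hcdef] at hc0
      have hm0 : (m : ℂ) ≠ 0 := Nat.cast_ne_zero.2 (by omega)
      have hβm : β ^ m ≠ 0 := pow_ne_zero _ hμ₁0
      rw [div_eq_zero_iff] at hc0
      rcases hc0 with h' | h'
      · rcases mul_eq_zero.1 h' with h'' | h''
        · rcases mul_eq_zero.1 h'' with h3 | h3
          · exact hm0 h3
          · exact hα h3
        · exact hβm h''
      · exact hμ₁0 h'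
  · -- two distinct eigenvalues
    set μ₂ := β with hμ₂def
    set v₂ : Fin 2 → ℂ := (α / (β - μ₁)) • v₁ + w with hv₂def
    have hβμ' : β - μ₁ ≠ 0 := sub_ne_zero.2 hβμ
    have hTv₂ : A *ᵥ v₂ = μ₂ • v₂ := by
      rw [hv₂def, Matrix.mulVec_add, Matrix.mulVec_smul, hTv₁, hTw]
      match_scalars
      · field_simp
        ring
      · ring
    have hv₂0 : v₂ ≠ 0 := by
      intro h
      have h2 : (α / (β - μ₁)) • v₁ + (1 : ℂ) • w = 0 := by
        rw [one_smul, ← hv₂def]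
        exact h
      exact one_ne_zero (huniqw _ _ h2).2
    have hμ₂0 : μ₂ ≠ 0 := by
      intro h
      apply glMulVec_ne_zero g hv₂0
      rw [show (g : Matrix (Fin 2) (Fin 2) ℂ) *ᵥ v₂ = A *ᵥ v₂ from rfl, hTv₂, h, zero_smul]
    have hindep2 : ∀ a b : ℂ, a • v₁ + b • v₂ = 0 → a = 0 ∧ b = 0 := by
      intro a b h
      have h2 : (a + b * (α / (β - μ₁))) • v₁ + b • w = 0 := by
        rw [hv₂def] at h
        linear_combination (norm := module) h
      obtain ⟨h3, h4⟩ := huniqw _ _ h2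
      refine ⟨?_, h4⟩
      rw [h4, zero_mul, add_zero] at h3
      exact h3
    have hdec2 : ∀ u : Fin 2 → ℂ, ∃ a b : ℂ, u = a • v₁ + b • v₂ := by
      intro u
      obtain ⟨a, b, hu⟩ := hdecw u
      refine ⟨a - b * (α / (β - μ₁)), b, ?_⟩
      rw [hu, hv₂def]
      module
    have hpair : ∀ a b a' b' : ℂ, a • v₁ + b • v₂ = a' • v₁ + b' • v₂ → a = a' ∧ b = b' := by
      intro a b a' b' h
      have h2 : (a - a') • v₁ + (b - b') • v₂ = 0 := by
        linear_combination (norm := module) h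
      obtain ⟨h3, h4⟩ := hindep2 _ _ h2
      exact ⟨sub_eq_zero.1 h3, sub_eq_zero.1 h4⟩
    -- powers on the eigenbasis
    have hk1 : ∀ k : ℕ, (A ^ k) *ᵥ v₁ = (μ₁ ^ k) • v₁ := heigpow v₁ μ₁ hTv₁
    have hk2 : ∀ k : ℕ, (A ^ k) *ᵥ v₂ = (μ₂ ^ k) • v₂ := heigpow v₂ μ₂ hTv₂
    have hAku : ∀ (k : ℕ) (a b : ℂ), (A ^ k) *ᵥ (a • v₁ + b • v₂)
        = (a * μ₁ ^ k) • v₁ + (b * μ₂ ^ k) • v₂ := by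
      intro k a b
      rw [Matrix.mulVec_add, Matrix.mulVec_smul, Matrix.mulVec_smul, hk1, hk2]
      match_scalars <;> ring
    set p₁ := Projectivization.mk ℂ v₁ hv₁0 with hp₁def
    set p₂ := Projectivization.mk ℂ v₂ hv₂0 with hp₂def
    have hfix1 : φ p₁ = p₁ := by
      obtain ⟨hnz, e⟩ := hg v₁ hv₁0
      rw [hp₁def, e]
      exact (mk_eq_mk_of_eq hTv₁ _ (smul_ne_zero hμ₁0 hv₁0)).trans
        ((Projectivization.mk_eq_mk_iff' ℂ _ _ _ hv₁0).2 ⟨μ₁, rfl⟩)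
    have hfix2 : φ p₂ = p₂ := by
      obtain ⟨hnz, e⟩ := hg v₂ hv₂0
      rw [hp₂def, e]
      exact (mk_eq_mk_of_eq hTv₂ _ (smul_ne_zero hμ₂0 hv₂0)).trans
        ((Projectivization.mk_eq_mk_iff' ℂ _ _ _ hv₂0).2 ⟨μ₂, rfl⟩)
    refine ⟨p₁, p₂, hm2, ?_, ?_⟩
    · -- classification of fixed points
      intro p hp
      induction p using Projectivization.ind with
      | h u hu =>
        obtain ⟨a, b, hu2⟩ := hdec2 u
        obtain ⟨hnz, e⟩ := hg u hu
        rw [e, Projectivization.mk_eq_mk_iff'] at hp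
        obtain ⟨cst, hc⟩ := hp
        have h5 : A *ᵥ u = (a * μ₁) • v₁ + (b * μ₂) • v₂ := by
          rw [hu2, Matrix.mulVec_add, Matrix.mulVec_smul, Matrix.mulVec_smul, hTv₁, hTv₂]
          match_scalars <;> ring
        have h6 : cst • u = (cst * a) • v₁ + (cst * b) • v₂ := by
          rw [hu2]
          match_scalars <;> ring
        obtain ⟨hca, hcb⟩ := hpair _ _ _ _ (h6.symm.trans (hc.trans h5))
        by_cases hb : b = 0
        · left
          exact (Projectivization.mk_eq_mk_iff' ℂ _ _ hu hv₁0).2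
            ⟨a, by rw [hu2, hb, zero_smul, add_zero]⟩
        · by_cases ha : a = 0
          · right
            exact (Projectivization.mk_eq_mk_iff' ℂ _ _ hu hv₂0).2
              ⟨b, by rw [hu2, ha, zero_smul, zero_add]⟩
          · exfalso
            have h7 : cst = μ₁ := by
              rw [mul_comm a] at hca
              exact mul_right_cancel₀ ha hca
            have h8 : cst = μ₂ := by
              rw [mul_comm b] at hcb
              exact mul_right_cancel₀ hb hcb
            exact hβμ (by rw [← h8, h7])
    · -- periods of non-fixed points
      intro p hp k
      induction p using Projectivization.ind with
      | h u hu =>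
        obtain ⟨a, b, hu2⟩ := hdec2 u
        have hab : a ≠ 0 ∧ b ≠ 0 := by
          constructor
          · intro h0
            apply hp
            have hep : Projectivization.mk ℂ u hu = p₂ :=
              (Projectivization.mk_eq_mk_iff' ℂ _ _ hu hv₂0).2
                ⟨b, by rw [hu2, h0, zero_smul, zero_add]⟩
            rw [hep]
            exact hfix2
          · intro h0
            apply hp
            have hep : Projectivization.mk ℂ u hu = p₁ :=
              (Projectivization.mk_eq_mk_iff' ℂ _ _ hu hv₁0).2
                ⟨a, by rw [hu2, h0, zero_smul, add_zero]⟩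
            rw [hep]
            exact hfix1
        constructor
        · intro hk
          obtain ⟨hnz, e⟩ := phi_pow_mk φ g hg k u hu
          rw [e, Projectivization.mk_eq_mk_iff'] at hk
          obtain ⟨cst, hc⟩ := hk
          have h5 : ((A : Matrix (Fin 2) (Fin 2) ℂ) ^ k) *ᵥ u
              = (a * μ₁ ^ k) • v₁ + (b * μ₂ ^ k) • v₂ := by
            rw [hu2]
            exact hAku k a b
          have h6 : cst • u = (cst * a) • v₁ + (cst * b) • v₂ := by
            rw [hu2]
            match_scalars <;> ring
          obtain ⟨hca, hcb⟩ := hpair _ _ _ _ (h6.symm.trans (hc.trans h5))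
          have h7 : cst = μ₁ ^ k := by
            rw [mul_comm a] at hca
            exact mul_right_cancel₀ hab.1 hca
          have h8 : cst = μ₂ ^ k := by
            rw [mul_comm b] at hcb
            exact mul_right_cancel₀ hab.2 hcb
          have hμk : μ₂ ^ k = μ₁ ^ k := by rw [← h8, h7]
          have hφk : φ ^ k = 1 := by
            ext q
            induction q using Projectivization.ind with
            | h u' hu' =>
              obtain ⟨a', b', hu'2⟩ := hdec2 u'
              obtain ⟨hnz', e'⟩ := phi_pow_mk φ g hg k u' hu'
              rw [e', Equiv.Perm.one_apply]
              have h9 : ((A : Matrix (Fin 2) (Fin 2) ℂ) ^ k) *ᵥ u' = (μ₁ ^ k) • u' := by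
                rw [hu'2, hAku k a' b', hμk]
                match_scalars <;> ring
              exact (mk_eq_mk_of_eq h9 _ (smul_ne_zero (pow_ne_zero _ hμ₁0) hu')).trans
                ((Projectivization.mk_eq_mk_iff' ℂ _ _ _ hu').2 ⟨μ₁ ^ k, rfl⟩)
          exact orderOf_dvd_of_pow_eq_one hφk
        · rintro ⟨d, rfl⟩
          rw [pow_mul, hm1, one_pow, Equiv.Perm.one_apply]

lemma forward (n : ℕ) (σ : Equiv.Perm (Fin n)) (hσ : σ ≠ 1)
    (φ : Equiv.Perm (Projectivization ℂ (Fin 2 → ℂ))) (g : GL (Fin 2) ℂ)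
    (x : Fin n → Projectivization ℂ (Fin 2 → ℂ))
    (hg : ∀ (v : Fin 2 → ℂ) (hv : v ≠ 0),
      ∃ hv' : Matrix.mulVec (g : Matrix (Fin 2) (Fin 2) ℂ) v ≠ 0,
        φ (Projectivization.mk ℂ v hv)
          = Projectivization.mk ℂ (Matrix.mulVec (g : Matrix (Fin 2) (Fin 2) ℂ) v) hv')
    (hfin : IsOfFinOrder φ) (hxinj : Function.Injective x)
    (hx : ∀ i, φ (x i) = x (σ i)) :
    ((∃ ℓ : ℕ, 2 ≤ ℓ ∧ ∀ i : Fin n, σ i ≠ i →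
        Set.ncard {j : Fin n | ∃ k : ℤ, (σ ^ k) i = j} = ℓ) ∧
      Set.ncard {i : Fin n | σ i = i} ≤ 2) := by
  classical
  have hφ1 : φ ≠ 1 := by
    intro h
    apply hσ
    ext i
    have h2 := hx i
    rw [h, Equiv.Perm.one_apply] at h2
    have h3 := hxinj h2
    simp [← h3]
  obtain ⟨p₁, p₂, hm2, hclass, hper⟩ := pgl_structure φ g hg hfin hφ1
  set m := orderOf φ with hmdef
  have hxpow : ∀ (k : ℕ) (i : Fin n), (φ ^ k) (x i) = x ((σ ^ k) i) := by
    intro k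
    induction k with
    | zero => intro i; simp
    | succ k ih =>
      intro i
      rw [pow_succ' φ, Equiv.Perm.mul_apply, ih i, hx, pow_succ' σ, Equiv.Perm.mul_apply]
  constructor
  · refine ⟨m, hm2, ?_⟩
    intro i hi
    have hxi : φ (x i) ≠ x i := by
      rw [hx i]
      intro h
      exact hi (hxinj h)
    have hperiod : ∀ k : ℕ, ((σ ^ k) i = i ↔ m ∣ k) := by
      intro k
      rw [← (hper (x i) hxi k)]
      constructor
      · intro h
        rw [hxpow k i, h]
      · intro h
        have h2 := hxpow k i
        rw [h] at h2
        exact hxinj h2.symm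
    rw [orbit_ncard_eq σ hi]
    have hd1 : orderOf (σ.cycleOf i) ∣ m :=
      (pow_apply_eq_self_iff σ hi m).1 ((hperiod m).2 dvd_rfl)
    have hd2 : m ∣ orderOf (σ.cycleOf i) :=
      (hperiod _).1 ((pow_apply_eq_self_iff σ hi _).2 dvd_rfl)
    exact Nat.dvd_antisymm hd1 hd2
  · have hsub : ∀ i ∈ {i : Fin n | σ i = i}, x i ∈ ({p₁, p₂} : Set _) := by
      intro i hi
      have hi' : σ i = i := hi
      have h2 : φ (x i) = x i := by
        rw [hx i, hi']
      rcases hclass (x i) h2 with h | h <;> simp [h]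
    have hfin2 : ({p₁, p₂} : Set (Projectivization ℂ (Fin 2 → ℂ))).Finite :=
      (Set.finite_singleton p₂).insert p₁
    have h3 := Set.ncard_le_ncard_of_injOn x hsub (hxinj.injOn) hfin2
    refine le_trans h3 (le_trans (Set.ncard_insert_le _ _) ?_)
    simp

end


theorem stmt4 (n : ℕ) (hn : 3 ≤ n) (σ : Equiv.Perm (Fin n)) (hσ : σ ≠ 1) :
    (∃ (φ : Equiv.Perm (Projectivization ℂ (Fin 2 → ℂ)))
       (g : Matrix.GeneralLinearGroup (Fin 2) ℂ)
       (x : Fin n → Projectivization ℂ (Fin 2 → ℂ)),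
        -- `φ` is an element of `PGL₂(ℂ)` (a Möbius transformation induced by a matrix `g`) …
        (∀ (v : Fin 2 → ℂ) (hv : v ≠ 0),
          ∃ hv' : Matrix.mulVec (g : Matrix (Fin 2) (Fin 2) ℂ) v ≠ 0,
            φ (Projectivization.mk ℂ v hv)
              = Projectivization.mk ℂ (Matrix.mulVec (g : Matrix (Fin 2) (Fin 2) ℂ) v) hv') ∧
        -- … of finite order, and `x` is injective with `φ (x i) = x (σ i)` for all `i`
        IsOfFinOrder φ ∧ Function.Injective x ∧ ∀ i, φ (x i) = x (σ i))
    ↔ -- `σ` is balanced: all nontrivial cycles have the same length `ℓ ≥ 2`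
      -- and `σ` has at most two fixed points
      ((∃ ℓ : ℕ, 2 ≤ ℓ ∧ ∀ i : Fin n, σ i ≠ i →
          Set.ncard {j : Fin n | ∃ k : ℤ, (σ ^ k) i = j} = ℓ) ∧
        Set.ncard {i : Fin n | σ i = i} ≤ 2) := by
  constructor
  · rintro ⟨φ, g, x, hg, hfin, hxinj, hx⟩
    exact forward n σ hσ φ g x hg hfin hxinj hx
  · rintro ⟨⟨ℓ, hl, hcyc⟩, hfix⟩
    exact backward n σ hσ ℓ hl hcyc hfix
end

section
/- Let I = {I₁,I₂,I₃,I₄} and J = {J₁,J₂,J₃,J₄} be two unordered partitions of Fin n into four nonempty parts. There exists a partition of Fin n into five nonempty parts P₁,…,P₅ such that both I and J occur among the four partitions {P₁,P₂,P₃,P₄∪P₅}, {P₁∪P₂,P₃,P₄,P₅}, {P₁,P₄,P₃,P₂∪P₅}, {P₁∪P₄,P₃,P₂,P₅} appearing in the associated Keel relation, if and only if the common refinement of I and J (the collection of nonempty sets of the form I_i ∩ J_j) has exactly 5 elements. -/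
def KeelGoal {n : ℕ} (I J : Finset (Finset (Fin n))) : Prop :=
  ∃ P₁ P₂ P₃ P₄ P₅ : Finset (Fin n),
      P₁.Nonempty ∧ P₂.Nonempty ∧ P₃.Nonempty ∧ P₄.Nonempty ∧ P₅.Nonempty ∧
      Disjoint P₁ P₂ ∧ Disjoint P₁ P₃ ∧ Disjoint P₁ P₄ ∧ Disjoint P₁ P₅ ∧
      Disjoint P₂ P₃ ∧ Disjoint P₂ P₄ ∧ Disjoint P₂ P₅ ∧
      Disjoint P₃ P₄ ∧ Disjoint P₃ P₅ ∧ Disjoint P₄ P₅ ∧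
      P₁ ∪ P₂ ∪ P₃ ∪ P₄ ∪ P₅ = Finset.univ ∧
      I ∈ ({{P₁, P₂, P₃, P₄ ∪ P₅}, {P₁ ∪ P₂, P₃, P₄, P₅},
            {P₁, P₄, P₃, P₂ ∪ P₅}, {P₁ ∪ P₄, P₃, P₂, P₅}} :
          Set (Finset (Finset (Fin n)))) ∧
      J ∈ ({{P₁, P₂, P₃, P₄ ∪ P₅}, {P₁ ∪ P₂, P₃, P₄, P₅},
            {P₁, P₄, P₃, P₂ ∪ P₅}, {P₁ ∪ P₄, P₃, P₂, P₅}} :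
          Set (Finset (Finset (Fin n))))

lemma build5 {n : ℕ} {I J : Finset (Finset (Fin n))} (R : Finset (Finset (Fin n)))
    (hRcard : R.card = 5) (hRne : ∀ Q ∈ R, Q.Nonempty)
    (hRdisj : ∀ Q ∈ R, ∀ Q' ∈ R, Q ≠ Q' → Disjoint Q Q')
    (hcov : ∀ x : Fin n, ∃ Q ∈ R, x ∈ Q)
    (a b c d e : Finset (Fin n))
    (ha : a ∈ R) (hb : b ∈ R) (hc : c ∈ R) (hd : d ∈ R) (he : e ∈ R)
    (hab : a ≠ b) (hac : a ≠ c) (had : a ≠ d) (hae : a ≠ e)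
    (hbc : b ≠ c) (hbd : b ≠ d) (hbe : b ≠ e) (hcd : c ≠ d) (hce : c ≠ e) (hde : d ≠ e)
    (hI : I = {a, b, c, d ∪ e})
    (hJ : J = {a ∪ b, c, d, e} ∨ J = {a, d, c, b ∪ e}) :
    KeelGoal I J := by
  have hcard5 : ({a, b, c, d, e} : Finset (Finset (Fin n))).card = 5 := by
    rw [Finset.card_insert_of_notMem (by simp [hab, hac, had, hae]),
        Finset.card_insert_of_notMem (by simp [hbc, hbd, hbe]),
        Finset.card_insert_of_notMem (by simp [hcd, hce]),
        Finset.card_insert_of_notMem (by simp [hde]), Finset.card_singleton]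
  have hsub : ({a, b, c, d, e} : Finset (Finset (Fin n))) ⊆ R := by
    intro x hx
    simp only [Finset.mem_insert, Finset.mem_singleton] at hx
    rcases hx with rfl | rfl | rfl | rfl | rfl <;> assumption
  have hR5 : ({a, b, c, d, e} : Finset (Finset (Fin n))) = R :=
    Finset.eq_of_subset_of_card_le hsub (by rw [hRcard, hcard5])
  refine ⟨a, b, c, d, e, hRne a ha, hRne b hb, hRne c hc, hRne d hd, hRne e he,
    hRdisj a ha b hb hab, hRdisj a ha c hc hac, hRdisj a ha d hd had, hRdisj a ha e he hae,
    hRdisj b hb c hc hbc, hRdisj b hb d hd hbd, hRdisj b hb e he hbe,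
    hRdisj c hc d hd hcd, hRdisj c hc e he hce, hRdisj d hd e he hde, ?_, ?_, ?_⟩
  · apply Finset.eq_univ_iff_forall.2
    intro x
    obtain ⟨Q, hQ, hxQ⟩ := hcov x
    rw [← hR5] at hQ
    simp only [Finset.mem_insert, Finset.mem_singleton] at hQ
    rcases hQ with rfl | rfl | rfl | rfl | rfl <;> simp [Finset.mem_union, hxQ]
  · exact Or.inl hI
  · rcases hJ with hJ | hJ
    · exact Or.inr (Or.inl hJ)
    · exact Or.inr (Or.inr (Or.inl hJ))


lemma fwd_master {n : ℕ} (P : Fin 5 → Finset (Fin n))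
    (hd : ∀ i j, i ≠ j → Disjoint (P i) (P j)) (hne : ∀ i, (P i).Nonempty)
    (F G : Finset (Finset (Fin 5)))
    (hmeet : ∀ σ ∈ F, ∀ τ ∈ G, ∀ k ∈ σ ∩ τ, σ ∩ τ = {k})
    (hcov : ∀ k : Fin 5, ∃ σ ∈ F, ∃ τ ∈ G, σ ∩ τ = {k})
    (I J : Finset (Finset (Fin n)))
    (hI : I = F.image (fun σ => σ.sup P)) (hJ : J = G.image (fun σ => σ.sup P)) :
    {S : Finset (Fin n) | S.Nonempty ∧ ∃ A ∈ I, ∃ B ∈ J, S = A ∩ B} = Set.range P := by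
  have hsupint : ∀ σ τ : Finset (Fin 5), σ.sup P ∩ τ.sup P = (σ ∩ τ).sup P := by
    intro σ τ; ext x
    simp only [Finset.mem_inter, Finset.mem_sup]
    constructor
    · rintro ⟨⟨i, hi, hxi⟩, ⟨j, hj, hxj⟩⟩
      have hij : i = j := by
        by_contra h
        exact Finset.disjoint_left.1 (hd i j h) hxi hxj
      subst hij
      exact ⟨i, ⟨hi, hj⟩, hxi⟩
    · rintro ⟨i, hi, hxi⟩
      exact ⟨⟨i, hi.1, hxi⟩, ⟨i, hi.2, hxi⟩⟩
  subst hI hJ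
  ext S
  simp only [Set.mem_setOf_eq, Set.mem_range]
  constructor
  · rintro ⟨hSne, A, hA, B, hB, rfl⟩
    rw [Finset.mem_image] at hA hB
    obtain ⟨σ, hσ, rfl⟩ := hA
    obtain ⟨τ, hτ, rfl⟩ := hB
    rw [hsupint] at hSne ⊢
    obtain ⟨x, hx⟩ := hSne
    rw [Finset.mem_sup] at hx
    obtain ⟨k, hk, -⟩ := hx
    have hk' := hmeet σ hσ τ hτ k hk
    exact ⟨k, by rw [hk', Finset.sup_singleton]⟩
  · rintro ⟨k, rfl⟩
    obtain ⟨σ, hσ, τ, hτ, hk⟩ := hcov k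
    refine ⟨hne k, σ.sup P, Finset.mem_image_of_mem _ hσ, τ.sup P, Finset.mem_image_of_mem _ hτ, ?_⟩
    rw [hsupint, hk, Finset.sup_singleton]

lemma exists_two {α : Type*} {s : Finset α} {f : α → ℕ} (hcard : s.card = 4)
    (hsum : ∑ a ∈ s, f a = 5) (hpos : ∀ a ∈ s, 1 ≤ f a) :
    ∃ a₀ ∈ s, f a₀ = 2 ∧ ∀ a ∈ s, a ≠ a₀ → f a = 1 := by
  classical
  have h2 : ∃ a₀ ∈ s, 2 ≤ f a₀ := by
    by_contra h
    push_neg at h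
    have hle : ∑ a ∈ s, f a ≤ ∑ a ∈ s, 1 := Finset.sum_le_sum (fun a ha => by have := h a ha; omega)
    rw [Finset.sum_const, smul_eq_mul, mul_one, hcard] at hle
    omega
  obtain ⟨a₀, ha₀, h2⟩ := h2
  have herase : ∑ a ∈ s.erase a₀, f a + f a₀ = 5 := by
    rw [Finset.sum_erase_add _ _ ha₀]; exact hsum
  have hcer : (s.erase a₀).card = 3 := by rw [Finset.card_erase_of_mem ha₀, hcard]
  have h3 : 3 ≤ ∑ a ∈ s.erase a₀, f a := by
    calc (3:ℕ) = ∑ _a ∈ s.erase a₀, 1 := by rw [Finset.sum_const, smul_eq_mul, mul_one, hcer]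
    _ ≤ _ := Finset.sum_le_sum fun a ha => hpos a (Finset.mem_of_mem_erase ha)
  refine ⟨a₀, ha₀, by omega, ?_⟩
  intro a ha hne
  by_contra hne1
  have h2a : 2 ≤ f a := by have := hpos a ha; omega
  have ha' : a ∈ s.erase a₀ := Finset.mem_erase.2 ⟨hne, ha⟩
  have heq : f a + ∑ x ∈ (s.erase a₀).erase a, f x = ∑ x ∈ s.erase a₀, f x :=
    Finset.add_sum_erase _ _ ha'
  have hcer2 : ((s.erase a₀).erase a).card = 2 := by
    rw [Finset.card_erase_of_mem ha', hcer]
  have h2' : 2 ≤ ∑ x ∈ (s.erase a₀).erase a, f x := by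
    calc (2:ℕ) = ∑ _x ∈ (s.erase a₀).erase a, 1 := by
          rw [Finset.sum_const, smul_eq_mul, mul_one, hcer2]
    _ ≤ _ := Finset.sum_le_sum fun x hx =>
          hpos x (Finset.mem_of_mem_erase (Finset.mem_of_mem_erase hx))
  omega




lemma split_struct {n : ℕ} (I R : Finset (Finset (Fin n)))
    (hIcard : I.card = 4) (hRcard : R.card = 5)
    (hIdisj : (I : Set (Finset (Fin n))).PairwiseDisjoint id)
    (hRne : ∀ Q ∈ R, Q.Nonempty)
    (hsubI : ∀ Q ∈ R, ∃ A ∈ I, Q ⊆ A)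
    (hcovI : ∀ A ∈ I, ∀ x ∈ A, ∃ Q ∈ R, Q ⊆ A ∧ x ∈ Q)
    (hInon : ∀ A ∈ I, A.Nonempty) :
    ∃ a b : Finset (Fin n), a ≠ b ∧ a ∈ R ∧ b ∈ R ∧ I = insert (a ∪ b) (R \ {a, b}) := by
  classical
  have huniq : ∀ Q ∈ R, ∀ A ∈ I, ∀ A' ∈ I, Q ⊆ A → Q ⊆ A' → A = A' := by
    intro Q hQ A hA A' hA' h1 h2
    by_contra hne
    obtain ⟨x, hx⟩ := hRne Q hQ
    exact Finset.disjoint_left.1 (hIdisj hA hA' hne) (h1 hx) (h2 hx)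
  have hAsup : ∀ A ∈ I, A = (R.filter (fun Q => Q ⊆ A)).sup id := by
    intro A hA
    apply Finset.Subset.antisymm
    · intro x hx
      obtain ⟨Q, hQ, hQA, hxQ⟩ := hcovI A hA x hx
      exact Finset.mem_sup.2 ⟨Q, Finset.mem_filter.2 ⟨hQ, hQA⟩, hxQ⟩
    · intro x hx
      rw [Finset.mem_sup] at hx
      obtain ⟨Q, hQ, hxQ⟩ := hx
      exact (Finset.mem_filter.1 hQ).2 hxQ
  have hbiUnion : I.biUnion (fun A => R.filter (fun Q => Q ⊆ A)) = R := by
    apply Finset.Subset.antisymm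
    · intro Q hQ
      rw [Finset.mem_biUnion] at hQ
      obtain ⟨A, _, hQ'⟩ := hQ
      exact (Finset.mem_filter.1 hQ').1
    · intro Q hQ
      obtain ⟨A, hA, hsub⟩ := hsubI Q hQ
      exact Finset.mem_biUnion.2 ⟨A, hA, Finset.mem_filter.2 ⟨hQ, hsub⟩⟩
  have hfibdisj : ∀ A ∈ I, ∀ A' ∈ I, A ≠ A' →
      Disjoint (R.filter (fun Q => Q ⊆ A)) (R.filter (fun Q => Q ⊆ A')) := by
    intro A hA A' hA' hne
    rw [Finset.disjoint_left]
    intro Q hQ1 hQ2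
    rw [Finset.mem_filter] at hQ1 hQ2
    exact hne (huniq Q hQ1.1 A hA A' hA' hQ1.2 hQ2.2)
  have hsum : ∑ A ∈ I, (R.filter (fun Q => Q ⊆ A)).card = 5 := by
    rw [← Finset.card_biUnion hfibdisj, hbiUnion, hRcard]
  have hpos : ∀ A ∈ I, 1 ≤ (R.filter (fun Q => Q ⊆ A)).card := by
    intro A hA
    obtain ⟨x, hx⟩ := hInon A hA
    obtain ⟨Q, hQ, hQA, _⟩ := hcovI A hA x hx
    exact Finset.card_pos.2 ⟨Q, Finset.mem_filter.2 ⟨hQ, hQA⟩⟩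
  obtain ⟨A₀, hA₀I, hA₀2, hA₀rest⟩ := exists_two hIcard hsum hpos
  obtain ⟨a, b, hab, hfibA₀⟩ := Finset.card_eq_two.1 hA₀2
  have haf : a ∈ R.filter (fun Q => Q ⊆ A₀) := by rw [hfibA₀]; simp
  have hbf : b ∈ R.filter (fun Q => Q ⊆ A₀) := by rw [hfibA₀]; simp
  have haR : a ∈ R := (Finset.mem_filter.1 haf).1
  have hbR : b ∈ R := (Finset.mem_filter.1 hbf).1
  have hA₀eq : A₀ = a ∪ b := by
    rw [hAsup A₀ hA₀I, hfibA₀]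
    rw [Finset.sup_insert, Finset.sup_singleton]
    rfl
  refine ⟨a, b, hab, haR, hbR, ?_⟩
  apply Finset.Subset.antisymm
  · intro A hA
    by_cases hAA₀ : A = A₀
    · subst hAA₀
      rw [hA₀eq]
      exact Finset.mem_insert_self _ _
    · have h1 : (R.filter (fun Q => Q ⊆ A)).card = 1 := hA₀rest A hA hAA₀
      obtain ⟨Q, hQ⟩ := Finset.card_eq_one.1 h1
      have hQf : Q ∈ R.filter (fun Q => Q ⊆ A) := by rw [hQ]; simp
      have hQR : Q ∈ R := (Finset.mem_filter.1 hQf).1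
      have hQA : Q ⊆ A := (Finset.mem_filter.1 hQf).2
      have hAQ : A = Q := by rw [hAsup A hA, hQ, Finset.sup_singleton]; rfl
      refine Finset.mem_insert.2 (Or.inr (Finset.mem_sdiff.2 ⟨hAQ ▸ hQR, ?_⟩))
      intro hmem
      rw [Finset.mem_insert, Finset.mem_singleton] at hmem
      have hQA₀ : A ⊆ A₀ := by
        rcases hmem with rfl | rfl
        · exact (Finset.mem_filter.1 haf).2
        · exact (Finset.mem_filter.1 hbf).2
      exact hAA₀ (huniq A (hAQ ▸ hQR) A hA A₀ hA₀I subset_rfl hQA₀)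
  · rw [Finset.insert_subset_iff]
    constructor
    · rw [← hA₀eq]; exact hA₀I
    · intro Q hQ
      rw [Finset.mem_sdiff] at hQ
      obtain ⟨hQR, hQnot⟩ := hQ
      obtain ⟨A, hA, hsub⟩ := hsubI Q hQR
      by_cases hAA₀ : A = A₀
      · subst hAA₀
        exfalso
        apply hQnot
        have : Q ∈ R.filter (fun Q' => Q' ⊆ A) := Finset.mem_filter.2 ⟨hQR, hsub⟩
        rw [hfibA₀] at this
        exact this
      · have h1 : (R.filter (fun Q' => Q' ⊆ A)).card = 1 := hA₀rest A hA hAA₀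
        obtain ⟨Q', hQ'⟩ := Finset.card_eq_one.1 h1
        have hQf : Q ∈ R.filter (fun Q' => Q' ⊆ A) := Finset.mem_filter.2 ⟨hQR, hsub⟩
        rw [hQ', Finset.mem_singleton] at hQf
        have hAQ : A = Q' := by rw [hAsup A hA, hQ', Finset.sup_singleton]; rfl
        rw [hQf, ← hAQ]
        exact hA

lemma shared_finish {n : ℕ} {I J : Finset (Finset (Fin n))} (R : Finset (Finset (Fin n)))
    (hRcard : R.card = 5) (hRne : ∀ Q ∈ R, Q.Nonempty)
    (hRdisj : ∀ Q ∈ R, ∀ Q' ∈ R, Q ≠ Q' → Disjoint Q Q')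
    (hcov : ∀ x : Fin n, ∃ Q ∈ R, x ∈ Q)
    (s u v : Finset (Fin n)) (hs : s ∈ R) (hu : u ∈ R) (hv : v ∈ R)
    (hus : u ≠ s) (hvs : v ≠ s) (huv : u ≠ v)
    (hI : I = insert (u ∪ s) (R \ {u, s}))
    (hJ : J = insert (v ∪ s) (R \ {v, s})) :
    KeelGoal I J := by
  classical
  have hsub3 : ({s, u, v} : Finset (Finset (Fin n))) ⊆ R := by
    intro x hx
    simp only [Finset.mem_insert, Finset.mem_singleton] at hx
    rcases hx with rfl | rfl | rfl <;> assumption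
  have hcard3 : ({s, u, v} : Finset (Finset (Fin n))).card = 3 := by
    rw [Finset.card_insert_of_notMem (by simp [Ne.symm hus, Ne.symm hvs]),
        Finset.card_insert_of_notMem (by simp [huv]), Finset.card_singleton]
  have hsd : (R \ ({s, u, v} : Finset (Finset (Fin n)))).card = 2 := by
    rw [Finset.card_sdiff_of_subset hsub3, hRcard, hcard3]
  obtain ⟨p, q, hpq, hpqeq⟩ := Finset.card_eq_two.1 hsd
  have hp' : p ∈ R \ ({s, u, v} : Finset (Finset (Fin n))) := by rw [hpqeq]; simp
  have hq' : q ∈ R \ ({s, u, v} : Finset (Finset (Fin n))) := by rw [hpqeq]; simp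
  rw [Finset.mem_sdiff] at hp' hq'
  obtain ⟨hpR, hpn⟩ := hp'
  obtain ⟨hqR, hqn⟩ := hq'
  simp only [Finset.mem_insert, Finset.mem_singleton, not_or] at hpn hqn
  obtain ⟨hps, hpu, hpv⟩ := hpn
  obtain ⟨hqs, hqu, hqv⟩ := hqn
  -- R \ {u, s} = {v, p, q}
  have h1 : R \ ({u, s} : Finset (Finset (Fin n))) = {v, p, q} := by
    symm
    apply Finset.eq_of_subset_of_card_le
    · intro x hx
      simp only [Finset.mem_insert, Finset.mem_singleton] at hx
      rcases hx with rfl | rfl | rfl <;>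
        · rw [Finset.mem_sdiff]
          refine ⟨by assumption, ?_⟩
          simp only [Finset.mem_insert, Finset.mem_singleton, not_or]
          constructor <;> first
            | exact Ne.symm huv | exact hvs | exact hpu | exact hps | exact hqu | exact hqs
    · have hsub2 : ({u, s} : Finset (Finset (Fin n))) ⊆ R := by
        intro x hx
        simp only [Finset.mem_insert, Finset.mem_singleton] at hx
        rcases hx with rfl | rfl <;> assumption
      have : (R \ ({u, s} : Finset (Finset (Fin n)))).card = 3 := by
        rw [Finset.card_sdiff_of_subset hsub2, hRcard,
          Finset.card_insert_of_notMem (by simp [hus]), Finset.card_singleton]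
      rw [this,
        Finset.card_insert_of_notMem (by simp [Ne.symm hpv, Ne.symm hqv]),
        Finset.card_insert_of_notMem (by simp [hpq]), Finset.card_singleton]
  have h2 : R \ ({v, s} : Finset (Finset (Fin n))) = {u, p, q} := by
    symm
    apply Finset.eq_of_subset_of_card_le
    · intro x hx
      simp only [Finset.mem_insert, Finset.mem_singleton] at hx
      rcases hx with rfl | rfl | rfl <;>
        · rw [Finset.mem_sdiff]
          refine ⟨by assumption, ?_⟩
          simp only [Finset.mem_insert, Finset.mem_singleton, not_or]
          constructor <;> first
            | exact huv | exact hus | exact hpv | exact hps | exact hqv | exact hqs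
    · have hsub2 : ({v, s} : Finset (Finset (Fin n))) ⊆ R := by
        intro x hx
        simp only [Finset.mem_insert, Finset.mem_singleton] at hx
        rcases hx with rfl | rfl <;> assumption
      have : (R \ ({v, s} : Finset (Finset (Fin n)))).card = 3 := by
        rw [Finset.card_sdiff_of_subset hsub2, hRcard,
          Finset.card_insert_of_notMem (by simp [hvs]), Finset.card_singleton]
      rw [this,
        Finset.card_insert_of_notMem (by simp [Ne.symm hpu, Ne.symm hqu]),
        Finset.card_insert_of_notMem (by simp [hpq]), Finset.card_singleton]
  rw [h1] at hI
  rw [h2] at hJ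
  -- build5 with a := p, b := v, c := q, d := u, e := s
  apply build5 R hRcard hRne hRdisj hcov p v q u s hpR hv hqR hu hs
    hpv hpq hpu hps (Ne.symm hqv) (Ne.symm huv) hvs hqu hqs hus
  · -- I = {p, v, q, u ∪ s}
    rw [hI]
    ext x
    simp only [Finset.mem_insert, Finset.mem_singleton]
    tauto
  · -- J = {p, u, q, v ∪ s}
    right
    rw [hJ]
    ext x
    simp only [Finset.mem_insert, Finset.mem_singleton]
    tauto

section
variable {n : ℕ}
lemma disjoint_finish {I J : Finset (Finset (Fin n))} (R : Finset (Finset (Fin n)))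
    (hRcard : R.card = 5) (hRne : ∀ Q ∈ R, Q.Nonempty)
    (hRdisj : ∀ Q ∈ R, ∀ Q' ∈ R, Q ≠ Q' → Disjoint Q Q')
    (hcov : ∀ x : Fin n, ∃ Q ∈ R, x ∈ Q)
    (a b c d : Finset (Fin n)) (ha : a ∈ R) (hb : b ∈ R) (hc : c ∈ R) (hd : d ∈ R)
    (hab : a ≠ b) (hcd : c ≠ d) (hac : a ≠ c) (had : a ≠ d) (hbc : b ≠ c) (hbd : b ≠ d)
    (hI : I = insert (a ∪ b) (R \ {a, b}))
    (hJ : J = insert (c ∪ d) (R \ {c, d})) :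
    KeelGoal I J := by
  classical
  have hsub4 : ({a, b, c, d} : Finset (Finset (Fin n))) ⊆ R := by
    intro x hx
    simp only [Finset.mem_insert, Finset.mem_singleton] at hx
    rcases hx with rfl | rfl | rfl | rfl <;> assumption
  have hcard4 : ({a, b, c, d} : Finset (Finset (Fin n))).card = 4 := by
    rw [Finset.card_insert_of_notMem (by simp [hab, hac, had]),
        Finset.card_insert_of_notMem (by simp [hbc, hbd]),
        Finset.card_insert_of_notMem (by simp [hcd]), Finset.card_singleton]
  have hsd : (R \ ({a, b, c, d} : Finset (Finset (Fin n)))).card = 1 := by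
    rw [Finset.card_sdiff_of_subset hsub4, hRcard, hcard4]
  obtain ⟨e, heq⟩ := Finset.card_eq_one.1 hsd
  have he' : e ∈ R \ ({a, b, c, d} : Finset (Finset (Fin n))) := by rw [heq]; simp
  rw [Finset.mem_sdiff] at he'
  obtain ⟨heR, hen⟩ := he'
  simp only [Finset.mem_insert, Finset.mem_singleton, not_or] at hen
  obtain ⟨hea, heb, hec, hed⟩ := hen
  have h1 : R \ ({a, b} : Finset (Finset (Fin n))) = {c, d, e} := by
    symm
    apply Finset.eq_of_subset_of_card_le
    · intro x hx
      simp only [Finset.mem_insert, Finset.mem_singleton] at hx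
      rcases hx with rfl | rfl | rfl <;>
        · rw [Finset.mem_sdiff]
          refine ⟨by assumption, ?_⟩
          simp only [Finset.mem_insert, Finset.mem_singleton, not_or]
          constructor <;> first
            | exact Ne.symm hac | exact Ne.symm hbc | exact Ne.symm had
            | exact Ne.symm hbd | exact hea | exact heb
    · have hsub2 : ({a, b} : Finset (Finset (Fin n))) ⊆ R := by
        intro x hx
        simp only [Finset.mem_insert, Finset.mem_singleton] at hx
        rcases hx with rfl | rfl <;> assumption
      have hc1 : (R \ ({a, b} : Finset (Finset (Fin n)))).card = 3 := by
        rw [Finset.card_sdiff_of_subset hsub2, hRcard,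
          Finset.card_insert_of_notMem (by simp [hab]), Finset.card_singleton]
      rw [hc1,
        Finset.card_insert_of_notMem (by simp [hcd, Ne.symm hec]),
        Finset.card_insert_of_notMem (by simp [Ne.symm hed]), Finset.card_singleton]
  have h2 : R \ ({c, d} : Finset (Finset (Fin n))) = {a, b, e} := by
    symm
    apply Finset.eq_of_subset_of_card_le
    · intro x hx
      simp only [Finset.mem_insert, Finset.mem_singleton] at hx
      rcases hx with rfl | rfl | rfl <;>
        · rw [Finset.mem_sdiff]
          refine ⟨by assumption, ?_⟩
          simp only [Finset.mem_insert, Finset.mem_singleton, not_or]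
          constructor <;> first
            | exact hac | exact hbc | exact had
            | exact hbd | exact hec | exact hed
    · have hsub2 : ({c, d} : Finset (Finset (Fin n))) ⊆ R := by
        intro x hx
        simp only [Finset.mem_insert, Finset.mem_singleton] at hx
        rcases hx with rfl | rfl <;> assumption
      have hc1 : (R \ ({c, d} : Finset (Finset (Fin n)))).card = 3 := by
        rw [Finset.card_sdiff_of_subset hsub2, hRcard,
          Finset.card_insert_of_notMem (by simp [hcd]), Finset.card_singleton]
      rw [hc1,
        Finset.card_insert_of_notMem (by simp [hab, Ne.symm hea]),
        Finset.card_insert_of_notMem (by simp [Ne.symm heb]), Finset.card_singleton]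
  rw [h1] at hI
  rw [h2] at hJ
  apply build5 R hRcard hRne hRdisj hcov c d e a b hc hd heR ha hb
    hcd (Ne.symm hec) (Ne.symm hac) (Ne.symm hbc)
    (Ne.symm hed) (Ne.symm had) (Ne.symm hbd)
    hea heb hab
  · rw [hI]
    ext x
    simp only [Finset.mem_insert, Finset.mem_singleton]
    tauto
  · left
    rw [hJ]
    ext x
    simp only [Finset.mem_insert, Finset.mem_singleton]
    tauto
end
theorem stmt9 (n : ℕ) (I J : Finset (Finset (Fin n)))
    (hIcard : I.card = 4) (hJcard : J.card = 4)
    (hInon : ∀ A ∈ I, A.Nonempty) (hJnon : ∀ A ∈ J, A.Nonempty)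
    (hIdisj : (I : Set (Finset (Fin n))).PairwiseDisjoint id)
    (hJdisj : (J : Set (Finset (Fin n))).PairwiseDisjoint id)
    (hIuniv : I.sup id = Finset.univ) (hJuniv : J.sup id = Finset.univ)
    (hIJ : I ≠ J) :
    (∃ P₁ P₂ P₃ P₄ P₅ : Finset (Fin n),
      P₁.Nonempty ∧ P₂.Nonempty ∧ P₃.Nonempty ∧ P₄.Nonempty ∧ P₅.Nonempty ∧
      Disjoint P₁ P₂ ∧ Disjoint P₁ P₃ ∧ Disjoint P₁ P₄ ∧ Disjoint P₁ P₅ ∧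
      Disjoint P₂ P₃ ∧ Disjoint P₂ P₄ ∧ Disjoint P₂ P₅ ∧
      Disjoint P₃ P₄ ∧ Disjoint P₃ P₅ ∧ Disjoint P₄ P₅ ∧
      P₁ ∪ P₂ ∪ P₃ ∪ P₄ ∪ P₅ = Finset.univ ∧
      I ∈ ({{P₁, P₂, P₃, P₄ ∪ P₅}, {P₁ ∪ P₂, P₃, P₄, P₅},
            {P₁, P₄, P₃, P₂ ∪ P₅}, {P₁ ∪ P₄, P₃, P₂, P₅}} :
          Set (Finset (Finset (Fin n)))) ∧
      J ∈ ({{P₁, P₂, P₃, P₄ ∪ P₅}, {P₁ ∪ P₂, P₃, P₄, P₅},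
            {P₁, P₄, P₃, P₂ ∪ P₅}, {P₁ ∪ P₄, P₃, P₂, P₅}} :
          Set (Finset (Finset (Fin n)))))
    ↔ Set.ncard {S : Finset (Fin n) | S.Nonempty ∧ ∃ A ∈ I, ∃ B ∈ J, S = A ∩ B} = 5 := by
  classical
  constructor
  · rintro ⟨P₁, P₂, P₃, P₄, P₅, h1, h2, h3, h4, h5, d12, d13, d14, d15, d23, d24, d25,
      d34, d35, d45, huniv, hI, hJ⟩
    clear huniv
    let P : Fin 5 → Finset (Fin n) := ![P₁, P₂, P₃, P₄, P₅]
    have hP0 : P 0 = P₁ := rfl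
    have hP1 : P 1 = P₂ := rfl
    have hP2 : P 2 = P₃ := rfl
    have hP3 : P 3 = P₄ := rfl
    have hP4 : P 4 = P₅ := rfl
    have hd : ∀ i j : Fin 5, i ≠ j → Disjoint (P i) (P j) := by
      intro i j hij
      fin_cases i <;> fin_cases j <;>
        first
          | exact absurd rfl hij
          | exact d12 | exact d12.symm | exact d13 | exact d13.symm
          | exact d14 | exact d14.symm | exact d15 | exact d15.symm
          | exact d23 | exact d23.symm | exact d24 | exact d24.symm
          | exact d25 | exact d25.symm | exact d34 | exact d34.symm
          | exact d35 | exact d35.symm | exact d45 | exact d45.symm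
    have hne : ∀ i : Fin 5, (P i).Nonempty := by
      intro i
      fin_cases i <;> first | exact h1 | exact h2 | exact h3 | exact h4 | exact h5
    have hPinj : Function.Injective P := by
      intro i j hij
      by_contra h
      have hdisj := hd i j h
      rw [hij] at hdisj
      obtain ⟨x, hx⟩ := hne j
      exact Finset.disjoint_left.1 hdisj hx hx
    have hrange : (Set.range P).ncard = 5 := by
      rw [show Set.range P = ↑(Finset.image P Finset.univ) by simp]
      rw [Set.ncard_coe_finset, Finset.card_image_of_injective _ hPinj,
        Finset.card_univ, Fintype.card_fin]
    have himg1 : ({P₁, P₂, P₃, P₄ ∪ P₅} : Finset (Finset (Fin n)))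
        = Finset.image (fun σ => σ.sup P)
            ({{0}, {1}, {2}, {3, 4}} : Finset (Finset (Fin 5))) := by
      simp only [Finset.image_insert, Finset.image_singleton, Finset.sup_insert,
        Finset.sup_singleton, hP0, hP1, hP2, hP3, hP4]
      rfl
    have himg2 : ({P₁ ∪ P₂, P₃, P₄, P₅} : Finset (Finset (Fin n)))
        = Finset.image (fun σ => σ.sup P)
            ({{0, 1}, {2}, {3}, {4}} : Finset (Finset (Fin 5))) := by
      simp only [Finset.image_insert, Finset.image_singleton, Finset.sup_insert,
        Finset.sup_singleton, hP0, hP1, hP2, hP3, hP4]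
      rfl
    have himg3 : ({P₁, P₄, P₃, P₂ ∪ P₅} : Finset (Finset (Fin n)))
        = Finset.image (fun σ => σ.sup P)
            ({{0}, {3}, {2}, {1, 4}} : Finset (Finset (Fin 5))) := by
      simp only [Finset.image_insert, Finset.image_singleton, Finset.sup_insert,
        Finset.sup_singleton, hP0, hP1, hP2, hP3, hP4]
      rfl
    have himg4 : ({P₁ ∪ P₄, P₃, P₂, P₅} : Finset (Finset (Fin n)))
        = Finset.image (fun σ => σ.sup P)
            ({{0, 3}, {2}, {1}, {4}} : Finset (Finset (Fin 5))) := by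
      simp only [Finset.image_insert, Finset.image_singleton, Finset.sup_insert,
        Finset.sup_singleton, hP0, hP1, hP2, hP3, hP4]
      rfl
    have key : ∀ F G : Finset (Finset (Fin 5)),
        (∀ σ ∈ F, ∀ τ ∈ G, ∀ k ∈ σ ∩ τ, σ ∩ τ = {k}) →
        (∀ k : Fin 5, ∃ σ ∈ F, ∃ τ ∈ G, σ ∩ τ = {k}) →
        I = F.image (fun σ => σ.sup P) → J = G.image (fun σ => σ.sup P) →
        Set.ncard {S : Finset (Fin n) | S.Nonempty ∧ ∃ A ∈ I, ∃ B ∈ J, S = A ∩ B} = 5 := by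
      intro F G hm hc hIF hJG
      rw [fwd_master P hd hne F G hm hc I J hIF hJG]
      exact hrange
    simp only [Set.mem_insert_iff, Set.mem_singleton_iff] at hI hJ
    rcases hI with hI | hI | hI | hI <;> rcases hJ with hJ | hJ | hJ | hJ
    · exact absurd (hI.trans hJ.symm) hIJ
    · exact key {{0}, {1}, {2}, {3, 4}} {{0, 1}, {2}, {3}, {4}} (by decide) (by decide)
        (hI.trans himg1) (hJ.trans himg2)
    · exact key {{0}, {1}, {2}, {3, 4}} {{0}, {3}, {2}, {1, 4}} (by decide) (by decide)
        (hI.trans himg1) (hJ.trans himg3)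
    · exact key {{0}, {1}, {2}, {3, 4}} {{0, 3}, {2}, {1}, {4}} (by decide) (by decide)
        (hI.trans himg1) (hJ.trans himg4)
    · exact key {{0, 1}, {2}, {3}, {4}} {{0}, {1}, {2}, {3, 4}} (by decide) (by decide)
        (hI.trans himg2) (hJ.trans himg1)
    · exact absurd (hI.trans hJ.symm) hIJ
    · exact key {{0, 1}, {2}, {3}, {4}} {{0}, {3}, {2}, {1, 4}} (by decide) (by decide)
        (hI.trans himg2) (hJ.trans himg3)
    · exact key {{0, 1}, {2}, {3}, {4}} {{0, 3}, {2}, {1}, {4}} (by decide) (by decide)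
        (hI.trans himg2) (hJ.trans himg4)
    · exact key {{0}, {3}, {2}, {1, 4}} {{0}, {1}, {2}, {3, 4}} (by decide) (by decide)
        (hI.trans himg3) (hJ.trans himg1)
    · exact key {{0}, {3}, {2}, {1, 4}} {{0, 1}, {2}, {3}, {4}} (by decide) (by decide)
        (hI.trans himg3) (hJ.trans himg2)
    · exact absurd (hI.trans hJ.symm) hIJ
    · exact key {{0}, {3}, {2}, {1, 4}} {{0, 3}, {2}, {1}, {4}} (by decide) (by decide)
        (hI.trans himg3) (hJ.trans himg4)
    · exact key {{0, 3}, {2}, {1}, {4}} {{0}, {1}, {2}, {3, 4}} (by decide) (by decide)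
        (hI.trans himg4) (hJ.trans himg1)
    · exact key {{0, 3}, {2}, {1}, {4}} {{0, 1}, {2}, {3}, {4}} (by decide) (by decide)
        (hI.trans himg4) (hJ.trans himg2)
    · exact key {{0, 3}, {2}, {1}, {4}} {{0}, {3}, {2}, {1, 4}} (by decide) (by decide)
        (hI.trans himg4) (hJ.trans himg3)
    · exact absurd (hI.trans hJ.symm) hIJ
  · intro hcard
    show KeelGoal I J
    set R : Finset (Finset (Fin n)) :=
      ((I ×ˢ J).image fun p => p.1 ∩ p.2).filter (fun S => S.Nonempty) with hRdef
    have hRmem : ∀ S, S ∈ R ↔ S.Nonempty ∧ ∃ A ∈ I, ∃ B ∈ J, S = A ∩ B := by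
      intro S
      rw [hRdef]
      constructor
      · intro hS
        rw [Finset.mem_filter] at hS
        obtain ⟨hS1, hS2⟩ := hS
        rw [Finset.mem_image] at hS1
        obtain ⟨p, hp, hps⟩ := hS1
        rw [Finset.mem_product] at hp
        exact ⟨hS2, p.1, hp.1, p.2, hp.2, hps.symm⟩
      · rintro ⟨hne, A, hA, B, hB, rfl⟩
        rw [Finset.mem_filter, Finset.mem_image]
        exact ⟨⟨(A, B), Finset.mem_product.2 ⟨hA, hB⟩, rfl⟩, hne⟩
    have hRcard : R.card = 5 := by
      have hco : (↑R : Set (Finset (Fin n)))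
          = {S : Finset (Fin n) | S.Nonempty ∧ ∃ A ∈ I, ∃ B ∈ J, S = A ∩ B} := by
        ext S
        rw [Finset.mem_coe, hRmem S]
        rfl
      rw [← Set.ncard_coe_finset R, hco]
      exact hcard
    have hRne : ∀ Q ∈ R, Q.Nonempty := fun Q hQ => ((hRmem Q).1 hQ).1
    have hRdisj : ∀ Q ∈ R, ∀ Q' ∈ R, Q ≠ Q' → Disjoint Q Q' := by
      intro Q hQ Q' hQ' hne
      obtain ⟨-, A, hA, B, hB, rfl⟩ := (hRmem Q).1 hQ
      obtain ⟨-, A', hA', B', hB', rfl⟩ := (hRmem Q').1 hQ'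
      by_cases hAA : A = A'
      · have hBB : B ≠ B' := by
          rintro rfl
          exact hne (by rw [hAA])
        exact Disjoint.mono inf_le_right inf_le_right (hJdisj hB hB' hBB)
      · exact Disjoint.mono inf_le_left inf_le_left (hIdisj hA hA' hAA)
    have hcov : ∀ x : Fin n, ∃ Q ∈ R, x ∈ Q := by
      intro x
      have hxI : x ∈ I.sup id := by rw [hIuniv]; exact Finset.mem_univ x
      rw [Finset.mem_sup] at hxI
      obtain ⟨A, hA, hxA⟩ := hxI
      have hxJ : x ∈ J.sup id := by rw [hJuniv]; exact Finset.mem_univ x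
      rw [Finset.mem_sup] at hxJ
      obtain ⟨B, hB, hxB⟩ := hxJ
      exact ⟨A ∩ B, (hRmem _).2 ⟨⟨x, Finset.mem_inter.2 ⟨hxA, hxB⟩⟩, A, hA, B, hB, rfl⟩,
        Finset.mem_inter.2 ⟨hxA, hxB⟩⟩
    have hsubI : ∀ Q ∈ R, ∃ A ∈ I, Q ⊆ A := by
      intro Q hQ
      obtain ⟨-, A, hA, B, hB, rfl⟩ := (hRmem Q).1 hQ
      exact ⟨A, hA, Finset.inter_subset_left⟩
    have hsubJ : ∀ Q ∈ R, ∃ B ∈ J, Q ⊆ B := by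
      intro Q hQ
      obtain ⟨-, A, hA, B, hB, rfl⟩ := (hRmem Q).1 hQ
      exact ⟨B, hB, Finset.inter_subset_right⟩
    have hcovI : ∀ A ∈ I, ∀ x ∈ A, ∃ Q ∈ R, Q ⊆ A ∧ x ∈ Q := by
      intro A hA x hx
      have hxJ : x ∈ J.sup id := by rw [hJuniv]; exact Finset.mem_univ x
      rw [Finset.mem_sup] at hxJ
      obtain ⟨B, hB, hxB⟩ := hxJ
      exact ⟨A ∩ B, (hRmem _).2 ⟨⟨x, Finset.mem_inter.2 ⟨hx, hxB⟩⟩, A, hA, B, hB, rfl⟩,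
        Finset.inter_subset_left, Finset.mem_inter.2 ⟨hx, hxB⟩⟩
    have hcovJ : ∀ B ∈ J, ∀ x ∈ B, ∃ Q ∈ R, Q ⊆ B ∧ x ∈ Q := by
      intro B hB x hx
      have hxI : x ∈ I.sup id := by rw [hIuniv]; exact Finset.mem_univ x
      rw [Finset.mem_sup] at hxI
      obtain ⟨A, hA, hxA⟩ := hxI
      exact ⟨A ∩ B, (hRmem _).2 ⟨⟨x, Finset.mem_inter.2 ⟨hxA, hx⟩⟩, A, hA, B, hB, rfl⟩,
        Finset.inter_subset_right, Finset.mem_inter.2 ⟨hxA, hx⟩⟩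
    obtain ⟨a, b, hab, haR, hbR, hIstr⟩ :=
      split_struct I R hIcard hRcard hIdisj hRne hsubI hcovI hInon
    obtain ⟨c, d, hcd, hcR, hdR, hJstr⟩ :=
      split_struct J R hJcard hRcard hJdisj hRne hsubJ hcovJ hJnon
    have hpairs : ({a, b} : Finset (Finset (Fin n))) ≠ {c, d} := by
      intro h
      apply hIJ
      have hun : a ∪ b = c ∪ d := by
        have h2 := congrArg (fun t : Finset (Finset (Fin n)) => t.sup id) h
        simpa [Finset.sup_insert, Finset.sup_singleton] using h2
      rw [hIstr, hJstr, h, hun]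
    by_cases hsh : a = c ∨ a = d ∨ b = c ∨ b = d
    · rcases hsh with h | h | h | h
      · subst h
        have hvs : d ≠ a := Ne.symm hcd
        have huv : b ≠ d := by
          rintro rfl
          exact hpairs rfl
        exact shared_finish R hRcard hRne hRdisj hcov a b d haR hbR hdR
          (Ne.symm hab) hvs huv
          (by rw [hIstr, Finset.union_comm a b, Finset.pair_comm a b])
          (by rw [hJstr, Finset.union_comm a d, Finset.pair_comm a d])
      · subst h
        have huv : b ≠ c := by
          rintro rfl
          exact hpairs (Finset.pair_comm a b)
        exact shared_finish R hRcard hRne hRdisj hcov a b c haR hbR hcR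
          (Ne.symm hab) hcd huv
          (by rw [hIstr, Finset.union_comm a b, Finset.pair_comm a b])
          hJstr
      · subst h
        have hvs : d ≠ b := Ne.symm hcd
        have huv : a ≠ d := by
          rintro rfl
          exact hpairs (Finset.pair_comm a b)
        exact shared_finish R hRcard hRne hRdisj hcov b a d hbR haR hdR
          hab hvs huv
          hIstr
          (by rw [hJstr, Finset.union_comm b d, Finset.pair_comm b d])
      · subst h
        have huv : a ≠ c := by
          rintro rfl
          exact hpairs rfl
        exact shared_finish R hRcard hRne hRdisj hcov b a c hbR haR hcR
          hab hcd huv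
          hIstr
          hJstr
    · push_neg at hsh
      obtain ⟨hac, had, hbc, hbd⟩ := hsh
      exact disjoint_finish R hRcard hRne hRdisj hcov a b c d haR hbR hcR hdR
        hab hcd hac had hbc hbd hIstr hJstr
end
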